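/- arXiv:2410.14984 — 5 statements merged into one kernel-verified Lean document; each statement's English description precedes it below -/
import Mathlib

section
/- Let Z_1 and Z_2 be independent real random variables with two-sided Pareto tails: there exist constants c_1, c_2 > 0, c_1', c_2' >= 0 and tail indices alpha_1, alpha_2 > 0 such that x^{alpha_i} * P(Z_i > x) -> c_i and x^{alpha_i} * P(Z_i < -x) -> c_i' as x -> infinity, for i = 1,2. Set alpha = min(alpha_1, alpha_2) and let F denote the cumulative distribution function of Z_1 + Z_2. Then the tail of the sum is regularly varying with index -alpha: for every k > 0, the limit as x -> infinity of (1 - F(k*x)) / (1 - F(x)) equals k^{-alpha}. -/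
open MeasureTheory Filter


lemma aux_pow_smaller (f : ℝ → ℝ) {α β c : ℝ} (hαβ : α ≤ β)
    (h : Tendsto (fun x => x ^ β * f x) atTop (nhds c)) :
    Tendsto (fun x => x ^ α * f x) atTop (nhds (if α = β then c else 0)) := by
  rcases eq_or_lt_of_le hαβ with rfl | hlt
  · simpa using h
  · rw [if_neg hlt.ne]
    have h0 : Tendsto (fun x : ℝ => x ^ (-(β - α))) atTop (nhds 0) :=
      tendsto_rpow_neg_atTop (by linarith)
    have := h0.mul h
    rw [zero_mul] at this
    refine this.congr' ?_
    filter_upwards [eventually_gt_atTop 0] with x hx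
    rw [← mul_assoc, ← Real.rpow_add hx]
    ring_nf

lemma aux_tendsto_zero (f : ℝ → ℝ) {β c : ℝ} (hβ : 0 < β)
    (h : Tendsto (fun x => x ^ β * f x) atTop (nhds c)) :
    Tendsto f atTop (nhds 0) := by
  have h0 : Tendsto (fun x : ℝ => x ^ (-β)) atTop (nhds 0) :=
    tendsto_rpow_neg_atTop hβ
  have := h0.mul h
  rw [zero_mul] at this
  refine this.congr' ?_
  filter_upwards [eventually_gt_atTop 0] with x hx
  rw [← mul_assoc, ← Real.rpow_add hx, neg_add_cancel, Real.rpow_zero, one_mul]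

lemma aux_mul_tendsto_atTop {a : ℝ} (ha : 0 < a) :
    Tendsto (fun x : ℝ => a * x) atTop atTop :=
  tendsto_atTop_atTop_of_monotone
    (fun u v huv => by nlinarith)
    (fun b => ⟨b / a + 1, by nlinarith [mul_div_cancel₀ b ha.ne']⟩)

lemma aux_scale (f : ℝ → ℝ) {α L a : ℝ} (ha : 0 < a)
    (h : Tendsto (fun x => x ^ α * f x) atTop (nhds L)) :
    Tendsto (fun x => x ^ α * f (a * x)) atTop (nhds (a ^ (-α) * L)) := by
  have hcomp : Tendsto (fun x : ℝ => (a * x) ^ α * f (a * x)) atTop (nhds L) :=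
    h.comp (aux_mul_tendsto_atTop ha)
  have := (tendsto_const_nhds (x := a ^ (-α))).mul hcomp
  refine this.congr' ?_
  filter_upwards [eventually_gt_atTop 0] with x hx
  rw [← mul_assoc, Real.mul_rpow ha.le hx.le, ← mul_assoc, ← Real.rpow_add ha,
    neg_add_cancel, Real.rpow_zero, one_mul]

/-- Key analytic lemma: squeeze for the tail of the sum. -/
lemma aux_key (p₁ p₂ q₁ q₂ T : ℝ → ℝ) (α₁ α₂ c₁ c₂ c₁' c₂' : ℝ)
    (hα₁ : 0 < α₁) (hα₂ : 0 < α₂) (hc₁ : 0 < c₁) (hc₂ : 0 < c₂)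
    (htail₁ : Tendsto (fun x => x ^ α₁ * p₁ x) atTop (nhds c₁))
    (htail₁' : Tendsto (fun x => x ^ α₁ * q₁ x) atTop (nhds c₁'))
    (htail₂ : Tendsto (fun x => x ^ α₂ * p₂ x) atTop (nhds c₂))
    (htail₂' : Tendsto (fun x => x ^ α₂ * q₂ x) atTop (nhds c₂'))
    (hupper : ∀ δ x : ℝ, 0 < δ → δ < 1 →
      T x ≤ p₁ ((1 - δ) * x) + p₂ ((1 - δ) * x) + p₁ (δ * x) * p₂ (δ * x))
    (hlower : ∀ δ x : ℝ, 0 < δ →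
      p₁ ((1 + δ) * x) * (1 - q₂ (δ * x)) + p₂ ((1 + δ) * x) * (1 - q₁ (δ * x))
        - p₁ ((1 + δ) * x) * p₂ ((1 + δ) * x) ≤ T x) :
    Tendsto (fun x => x ^ (min α₁ α₂) * T x) atTop
      (nhds ((if min α₁ α₂ = α₁ then c₁ else 0) + (if min α₁ α₂ = α₂ then c₂ else 0))) := by
  set α := min α₁ α₂ with hαdef
  have hα : 0 < α := lt_min hα₁ hα₂
  set L₁ : ℝ := if α = α₁ then c₁ else 0 with hL₁def
  set L₂ : ℝ := if α = α₂ then c₂ else 0 with hL₂def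
  set C : ℝ := L₁ + L₂ with hCdef
  have hL₁nn : 0 ≤ L₁ := by rw [hL₁def]; split <;> simp [hc₁.le]
  have hL₂nn : 0 ≤ L₂ := by rw [hL₂def]; split <;> simp [hc₂.le]
  have hCpos : 0 < C := by
    rw [hCdef, hL₁def, hL₂def]
    rcases min_choice α₁ α₂ with h | h
    · rw [if_pos h]; split <;> [linarith; linarith]
    · rw [if_pos h]; split <;> [linarith; linarith]
  -- limits of the individual tails with exponent α
  have hL₁lim : Tendsto (fun x => x ^ α * p₁ x) atTop (nhds L₁) :=
    aux_pow_smaller p₁ (min_le_left _ _) htail₁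
  have hL₂lim : Tendsto (fun x => x ^ α * p₂ x) atTop (nhds L₂) :=
    aux_pow_smaller p₂ (min_le_right _ _) htail₂
  have hq₁0 : Tendsto q₁ atTop (nhds 0) := aux_tendsto_zero q₁ hα₁ htail₁'
  have hq₂0 : Tendsto q₂ atTop (nhds 0) := aux_tendsto_zero q₂ hα₂ htail₂'
  have hp₂0 : Tendsto p₂ atTop (nhds 0) := aux_tendsto_zero p₂ hα₂ htail₂
  rw [Metric.tendsto_nhds]
  intro ε hε
  -- choose δ
  have hφcont : Tendsto (fun δ : ℝ => (1 - δ) ^ (-α) * C) (nhdsWithin 0 (Set.Ioi 0)) (nhds C) := by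
    have h1 : ContinuousAt (fun δ : ℝ => (1 - δ) ^ (-α) * C) 0 := by
      apply ContinuousAt.mul _ continuousAt_const
      exact (Real.continuousAt_rpow_const _ _ (Or.inl (by norm_num))).comp
        ((continuous_const.sub continuous_id).continuousAt)
    simpa using h1.tendsto.mono_left nhdsWithin_le_nhds
  have hψcont : Tendsto (fun δ : ℝ => (1 + δ) ^ (-α) * C) (nhdsWithin 0 (Set.Ioi 0)) (nhds C) := by
    have h1 : ContinuousAt (fun δ : ℝ => (1 + δ) ^ (-α) * C) 0 := by
      apply ContinuousAt.mul _ continuousAt_const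
      exact (Real.continuousAt_rpow_const _ _ (Or.inl (by norm_num))).comp
        ((continuous_const.add continuous_id).continuousAt)
    simpa using h1.tendsto.mono_left nhdsWithin_le_nhds
  have hδex : ∃ δ : ℝ, 0 < δ ∧ δ < 1 ∧ (1 - δ) ^ (-α) * C < C + ε / 2 ∧
      C - ε / 2 < (1 + δ) ^ (-α) * C := by
    have e1 := hφcont.eventually_lt_const (show C < C + ε / 2 by linarith)
    have e2 := hψcont.eventually_const_lt (show C - ε / 2 < C by linarith)
    have e3 : ∀ᶠ δ : ℝ in nhdsWithin 0 (Set.Ioi 0), δ ∈ Set.Ioi (0:ℝ) :=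
      eventually_mem_nhdsWithin
    have e4 : ∀ᶠ δ : ℝ in nhdsWithin 0 (Set.Ioi 0), δ < 1 :=
      eventually_nhdsWithin_of_eventually_nhds (eventually_lt_nhds one_pos)
    obtain ⟨δ, h1, h2, h3, h4⟩ := (e1.and (e2.and (e3.and e4))).exists
    exact ⟨δ, h3, h4, h1, h2⟩
  obtain ⟨δ, hδ0, hδ1, hδu, hδl⟩ := hδex
  have h1δ : (0:ℝ) < 1 - δ := by linarith
  have h1δ' : (0:ℝ) < 1 + δ := by linarith
  -- upper bounding function
  have hU : Tendsto (fun x => x ^ α * p₁ ((1 - δ) * x) + x ^ α * p₂ ((1 - δ) * x)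
      + (x ^ α * p₁ (δ * x)) * p₂ (δ * x)) atTop
      (nhds ((1 - δ) ^ (-α) * L₁ + (1 - δ) ^ (-α) * L₂ + ((δ : ℝ) ^ (-α) * L₁) * 0)) := by
    exact ((aux_scale p₁ h1δ hL₁lim).add (aux_scale p₂ h1δ hL₂lim)).add
      ((aux_scale p₁ hδ0 hL₁lim).mul (hp₂0.comp (aux_mul_tendsto_atTop hδ0)))
  rw [show (1 - δ) ^ (-α) * L₁ + (1 - δ) ^ (-α) * L₂ + ((δ : ℝ) ^ (-α) * L₁) * 0
      = (1 - δ) ^ (-α) * C by rw [hCdef]; ring] at hU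
  have hUe : ∀ᶠ x in atTop, x ^ α * p₁ ((1 - δ) * x) + x ^ α * p₂ ((1 - δ) * x)
      + (x ^ α * p₁ (δ * x)) * p₂ (δ * x) < C + ε :=
    hU.eventually_lt_const (lt_of_lt_of_le hδu (by linarith))
  -- lower bounding function
  have hW : Tendsto (fun x => (x ^ α * p₁ ((1 + δ) * x)) * (1 - q₂ (δ * x))
      + (x ^ α * p₂ ((1 + δ) * x)) * (1 - q₁ (δ * x))
      - (x ^ α * p₁ ((1 + δ) * x)) * p₂ ((1 + δ) * x)) atTop
      (nhds (((1 + δ) ^ (-α) * L₁) * (1 - 0) + ((1 + δ) ^ (-α) * L₂) * (1 - 0)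
        - ((1 + δ) ^ (-α) * L₁) * 0)) := by
    exact (((aux_scale p₁ h1δ' hL₁lim).mul
        (tendsto_const_nhds.sub (hq₂0.comp (aux_mul_tendsto_atTop hδ0)))).add
      ((aux_scale p₂ h1δ' hL₂lim).mul
        (tendsto_const_nhds.sub (hq₁0.comp (aux_mul_tendsto_atTop hδ0))))).sub
      ((aux_scale p₁ h1δ' hL₁lim).mul (hp₂0.comp (aux_mul_tendsto_atTop h1δ')))
  rw [show ((1 + δ) ^ (-α) * L₁) * (1 - 0) + ((1 + δ) ^ (-α) * L₂) * (1 - 0)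
      - ((1 + δ) ^ (-α) * L₁) * 0 = (1 + δ) ^ (-α) * C by rw [hCdef]; ring] at hW
  have hWe : ∀ᶠ x in atTop, C - ε < (x ^ α * p₁ ((1 + δ) * x)) * (1 - q₂ (δ * x))
      + (x ^ α * p₂ ((1 + δ) * x)) * (1 - q₁ (δ * x))
      - (x ^ α * p₁ ((1 + δ) * x)) * p₂ ((1 + δ) * x) :=
    hW.eventually_const_lt (lt_of_le_of_lt (by linarith : C - ε ≤ C - ε / 2) hδl)
  filter_upwards [hUe, hWe, eventually_gt_atTop 0] with x hux hwx hx
  have hxα : (0:ℝ) ≤ x ^ α := Real.rpow_nonneg hx.le α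
  rw [Real.dist_eq, abs_lt]
  constructor
  · -- lower bound
    have h2 := mul_le_mul_of_nonneg_left (hlower δ x hδ0) hxα
    nlinarith [h2]
  · -- upper bound
    have h2 := mul_le_mul_of_nonneg_left (hupper δ x hδ0 hδ1) hxα
    nlinarith [h2]

section probpart
variable {Ω : Type*} [MeasurableSpace Ω] (ℙ : Measure Ω) [IsProbabilityMeasure ℙ]
  (Z₁ Z₂ : Ω → ℝ)

/-- Upper bound on the tail of the sum. -/
lemma aux_upper (hindep : ProbabilityTheory.IndepFun Z₁ Z₂ ℙ) (δ x : ℝ) (hδ0 : 0 < δ) (hδ1 : δ < 1) :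
    (ℙ {ω | x < Z₁ ω + Z₂ ω}).toReal ≤
      (ℙ {ω | (1 - δ) * x < Z₁ ω}).toReal + (ℙ {ω | (1 - δ) * x < Z₂ ω}).toReal
      + (ℙ {ω | δ * x < Z₁ ω}).toReal * (ℙ {ω | δ * x < Z₂ ω}).toReal := by
  have hsub : {ω | x < Z₁ ω + Z₂ ω} ⊆
      ({ω | (1 - δ) * x < Z₁ ω} ∪ {ω | (1 - δ) * x < Z₂ ω}) ∪
      (Z₁ ⁻¹' Set.Ioi (δ * x) ∩ Z₂ ⁻¹' Set.Ioi (δ * x)) := by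
    intro ω hω
    simp only [Set.mem_setOf_eq] at hω
    by_cases h1 : (1 - δ) * x < Z₁ ω
    · exact Or.inl (Or.inl h1)
    by_cases h2 : (1 - δ) * x < Z₂ ω
    · exact Or.inl (Or.inr h2)
    push_neg at h1 h2
    refine Or.inr ⟨?_, ?_⟩ <;> simp only [Set.mem_preimage, Set.mem_Ioi] <;> nlinarith
  have hind : ℙ (Z₁ ⁻¹' Set.Ioi (δ * x) ∩ Z₂ ⁻¹' Set.Ioi (δ * x))
      = ℙ (Z₁ ⁻¹' Set.Ioi (δ * x)) * ℙ (Z₂ ⁻¹' Set.Ioi (δ * x)) :=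
    hindep.measure_inter_preimage_eq_mul _ _ measurableSet_Ioi measurableSet_Ioi
  calc (ℙ {ω | x < Z₁ ω + Z₂ ω}).toReal
      ≤ (ℙ {ω | (1 - δ) * x < Z₁ ω} + ℙ {ω | (1 - δ) * x < Z₂ ω}
        + ℙ (Z₁ ⁻¹' Set.Ioi (δ * x)) * ℙ (Z₂ ⁻¹' Set.Ioi (δ * x))).toReal := by
        apply ENNReal.toReal_mono
        · finiteness
        · rw [← hind]
          exact le_trans (measure_mono hsub)
            (le_trans (measure_union_le _ _) (by gcongr; exact measure_union_le _ _))
    _ = (ℙ {ω | (1 - δ) * x < Z₁ ω}).toReal + (ℙ {ω | (1 - δ) * x < Z₂ ω}).toReal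
        + (ℙ {ω | δ * x < Z₁ ω}).toReal * (ℙ {ω | δ * x < Z₂ ω}).toReal := by
        rw [ENNReal.toReal_add (by finiteness) (by finiteness),
          ENNReal.toReal_add (by finiteness) (by finiteness), ENNReal.toReal_mul]
        rfl

/-- Lower bound on the tail of the sum. -/
lemma aux_lower (hZ₁ : Measurable Z₁) (hZ₂ : Measurable Z₂)
    (hindep : ProbabilityTheory.IndepFun Z₁ Z₂ ℙ) (δ x : ℝ) (hδ0 : 0 < δ) :
    (ℙ {ω | (1 + δ) * x < Z₁ ω}).toReal * (1 - (ℙ {ω | Z₂ ω < -(δ * x)}).toReal)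
    + (ℙ {ω | (1 + δ) * x < Z₂ ω}).toReal * (1 - (ℙ {ω | Z₁ ω < -(δ * x)}).toReal)
    - (ℙ {ω | (1 + δ) * x < Z₁ ω}).toReal * (ℙ {ω | (1 + δ) * x < Z₂ ω}).toReal
    ≤ (ℙ {ω | x < Z₁ ω + Z₂ ω}).toReal := by
  set A : Set Ω := Z₁ ⁻¹' Set.Ioi ((1 + δ) * x) ∩ Z₂ ⁻¹' Set.Ici (-(δ * x)) with hA
  set B : Set Ω := Z₁ ⁻¹' Set.Ici (-(δ * x)) ∩ Z₂ ⁻¹' Set.Ioi ((1 + δ) * x) with hB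
  have hAmeas : MeasurableSet A := (hZ₁ measurableSet_Ioi).inter (hZ₂ measurableSet_Ici)
  have hBmeas : MeasurableSet B := (hZ₁ measurableSet_Ici).inter (hZ₂ measurableSet_Ioi)
  have hsub : A ∪ B ⊆ {ω | x < Z₁ ω + Z₂ ω} := by
    rintro ω (⟨h1, h2⟩ | ⟨h1, h2⟩) <;>
      simp only [Set.mem_preimage, Set.mem_Ioi, Set.mem_Ici] at h1 h2 <;>
      simp only [Set.mem_setOf_eq] <;> nlinarith
  have hABsub : A ∩ B ⊆ Z₁ ⁻¹' Set.Ioi ((1 + δ) * x) ∩ Z₂ ⁻¹' Set.Ioi ((1 + δ) * x) := by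
    rintro ω ⟨⟨h1, _⟩, ⟨_, h2⟩⟩; exact ⟨h1, h2⟩
  -- inclusion-exclusion in toReal
  have hie : ℙ (A ∪ B) + ℙ (A ∩ B) = ℙ A + ℙ B := measure_union_add_inter A hBmeas
  have hie' : (ℙ (A ∪ B)).toReal + (ℙ (A ∩ B)).toReal = (ℙ A).toReal + (ℙ B).toReal := by
    rw [← ENNReal.toReal_add (by finiteness) (by finiteness),
      ← ENNReal.toReal_add (by finiteness) (by finiteness), hie]
  have hAval : (ℙ A).toReal = (ℙ {ω | (1 + δ) * x < Z₁ ω}).toReal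
      * (1 - (ℙ {ω | Z₂ ω < -(δ * x)}).toReal) := by
    rw [hA, hindep.measure_inter_preimage_eq_mul _ _ measurableSet_Ioi measurableSet_Ici,
      ENNReal.toReal_mul]
    congr 1
    have hc : Z₂ ⁻¹' Set.Ici (-(δ * x)) = {ω | Z₂ ω < -(δ * x)}ᶜ := by
      ext ω; simp [not_lt]
    rw [hc, measure_compl (measurableSet_lt hZ₂ measurable_const) (measure_ne_top _ _),
      measure_univ, ENNReal.toReal_sub_of_le prob_le_one (by simp), ENNReal.toReal_one]
  have hBval : (ℙ B).toReal = (ℙ {ω | (1 + δ) * x < Z₂ ω}).toReal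
      * (1 - (ℙ {ω | Z₁ ω < -(δ * x)}).toReal) := by
    rw [hB, hindep.measure_inter_preimage_eq_mul _ _ measurableSet_Ici measurableSet_Ioi,
      ENNReal.toReal_mul, mul_comm]
    congr 1
    have hc : Z₁ ⁻¹' Set.Ici (-(δ * x)) = {ω | Z₁ ω < -(δ * x)}ᶜ := by
      ext ω; simp [not_lt]
    rw [hc, measure_compl (measurableSet_lt hZ₁ measurable_const) (measure_ne_top _ _),
      measure_univ, ENNReal.toReal_sub_of_le prob_le_one (by simp), ENNReal.toReal_one]
  have hABle : (ℙ (A ∩ B)).toReal ≤ (ℙ {ω | (1 + δ) * x < Z₁ ω}).toReal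
      * (ℙ {ω | (1 + δ) * x < Z₂ ω}).toReal := by
    rw [← ENNReal.toReal_mul,
      show {ω | (1 + δ) * x < Z₁ ω} = Z₁ ⁻¹' Set.Ioi ((1 + δ) * x) from rfl,
      show {ω | (1 + δ) * x < Z₂ ω} = Z₂ ⁻¹' Set.Ioi ((1 + δ) * x) from rfl,
      ← hindep.measure_inter_preimage_eq_mul _ _ measurableSet_Ioi measurableSet_Ioi]
    exact ENNReal.toReal_mono (measure_ne_top _ _) (measure_mono hABsub)
  have hfin : (ℙ (A ∪ B)).toReal ≤ (ℙ {ω | x < Z₁ ω + Z₂ ω}).toReal :=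
    ENNReal.toReal_mono (measure_ne_top _ _) (measure_mono hsub)
  linarith
end probpart

/-- **Tucker's lemma on convolutions of Pareto-tailed distributions.** If `Z₁` and `Z₂` are
independent real random variables with two-sided Pareto tails of indices `α₁` and `α₂`, then
the right tail of `Z₁ + Z₂` is regularly varying with index `-min α₁ α₂`. -/
theorem tail_sum_pareto_regularly_varying
    {Ω : Type*} [MeasurableSpace Ω] (ℙ : Measure Ω) [IsProbabilityMeasure ℙ]
    (Z₁ Z₂ : Ω → ℝ) (hZ₁ : Measurable Z₁) (hZ₂ : Measurable Z₂)
    (hindep : ProbabilityTheory.IndepFun Z₁ Z₂ ℙ)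
    (α₁ α₂ c₁ c₂ c₁' c₂' : ℝ) (hα₁ : 0 < α₁) (hα₂ : 0 < α₂)
    (hc₁ : 0 < c₁) (hc₂ : 0 < c₂) (hc₁' : 0 ≤ c₁') (hc₂' : 0 ≤ c₂')
    (htail₁ : Tendsto (fun x : ℝ => x ^ α₁ * (ℙ {ω | x < Z₁ ω}).toReal) atTop (nhds c₁))
    (htail₁' : Tendsto (fun x : ℝ => x ^ α₁ * (ℙ {ω | Z₁ ω < -x}).toReal) atTop (nhds c₁'))
    (htail₂ : Tendsto (fun x : ℝ => x ^ α₂ * (ℙ {ω | x < Z₂ ω}).toReal) atTop (nhds c₂))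
    (htail₂' : Tendsto (fun x : ℝ => x ^ α₂ * (ℙ {ω | Z₂ ω < -x}).toReal) atTop (nhds c₂'))
    (F : ℝ → ℝ) (hF : ∀ x, F x = (ℙ {ω | Z₁ ω + Z₂ ω ≤ x}).toReal) :
    ∀ k : ℝ, 0 < k →
      Tendsto (fun x : ℝ => (1 - F (k * x)) / (1 - F x)) atTop
        (nhds (k ^ (-(min α₁ α₂)))) := by
  intro k hk
  set α := min α₁ α₂ with hαdef
  have hα : 0 < α := lt_min hα₁ hα₂
  have hTdef : ∀ x : ℝ, 1 - F x = (ℙ {ω | x < Z₁ ω + Z₂ ω}).toReal := by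
    intro x
    rw [hF]
    have hms : MeasurableSet {ω | Z₁ ω + Z₂ ω ≤ x} :=
      measurableSet_le (hZ₁.add hZ₂) measurable_const
    have hcompl : {ω | x < Z₁ ω + Z₂ ω} = {ω | Z₁ ω + Z₂ ω ≤ x}ᶜ := by
      ext ω; simp [not_le]
    rw [hcompl, measure_compl hms (measure_ne_top _ _), measure_univ,
      ENNReal.toReal_sub_of_le prob_le_one (by simp), ENNReal.toReal_one]
  have hkey : Tendsto (fun x => x ^ α * (ℙ {ω | x < Z₁ ω + Z₂ ω}).toReal) atTop
      (nhds ((if α = α₁ then c₁ else 0) + (if α = α₂ then c₂ else 0))) := by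
    refine aux_key (fun x => (ℙ {ω | x < Z₁ ω}).toReal) (fun x => (ℙ {ω | x < Z₂ ω}).toReal)
      (fun x => (ℙ {ω | Z₁ ω < -x}).toReal) (fun x => (ℙ {ω | Z₂ ω < -x}).toReal)
      (fun x => (ℙ {ω | x < Z₁ ω + Z₂ ω}).toReal) α₁ α₂ c₁ c₂ c₁' c₂' hα₁ hα₂ hc₁ hc₂
      htail₁ htail₁' htail₂ htail₂' ?_ ?_
    · intro δ x hδ0 hδ1; exact aux_upper ℙ Z₁ Z₂ hindep δ x hδ0 hδ1
    · intro δ x hδ0; exact aux_lower ℙ Z₁ Z₂ hZ₁ hZ₂ hindep δ x hδ0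
  set C : ℝ := (if α = α₁ then c₁ else 0) + (if α = α₂ then c₂ else 0) with hCdef
  have hCpos : 0 < C := by
    rw [hCdef]
    rcases min_choice α₁ α₂ with h | h
    · rw [if_pos h]; split <;> [linarith; linarith]
    · rw [if_pos h]; split <;> [linarith; linarith]
  have hnum := aux_scale (fun x => (ℙ {ω | x < Z₁ ω + Z₂ ω}).toReal) hk hkey
  have hdiv := hnum.div hkey hCpos.ne'
  rw [mul_div_assoc, div_self hCpos.ne', mul_one] at hdiv
  refine hdiv.congr' ?_
  filter_upwards [eventually_gt_atTop 0] with x hx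
  show x ^ α * (ℙ {ω | k * x < Z₁ ω + Z₂ ω}).toReal
      / (x ^ α * (ℙ {ω | x < Z₁ ω + Z₂ ω}).toReal) = (1 - F (k * x)) / (1 - F x)
  rw [hTdef, hTdef, mul_div_mul_left _ _ (ne_of_gt (Real.rpow_pos_of_pos hx α))]
end

section
/- Let X be an integrable real random variable whose cumulative distribution function F is continuous. Fix a prudence level q in (0,1) and let x_q = inf{ x : F(x) > q } (so that F(x_q) = q by continuity), and let F^{-1}(gamma) = inf{ x : F(x) >= gamma } denote the generalized inverse (quantile function). Then the Tail Conditional Expectation equals the Expected Shortfall: E[ X * 1{X > x_q} ] / (1 - q) = (1/(1-q)) * integral from q to 1 of F^{-1}(gamma) dgamma; equivalently, E[X | X > x_q] = (1/(1-q)) * integral from q to 1 of VaR_gamma[X] dgamma, where VaR_gamma[X] = F^{-1}(gamma). -/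
open MeasureTheory

/-- **TCE equals ES for continuous distributions.** If `X` is integrable with continuous cdf `F`,
`q ∈ (0,1)`, `x_q = inf{x : F x > q}`, then
`E[X 1{X > x_q}]/(1-q) = (1/(1-q)) ∫_q^1 F⁻¹(γ) dγ`, where `F⁻¹` is the quantile function. -/
theorem tce_eq_es_of_continuous_cdf
    {Ω : Type*} [MeasurableSpace Ω] (ℙ : Measure Ω) [IsProbabilityMeasure ℙ]
    (X : Ω → ℝ) (hX : Measurable X) (hXint : Integrable X ℙ)
    (F : ℝ → ℝ) (hF : ∀ x, F x = (ℙ {ω | X ω ≤ x}).toReal)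
    (hFcont : Continuous F)
    (q : ℝ) (hq : q ∈ Set.Ioo (0 : ℝ) 1)
    (xq : ℝ) (hxq : xq = sInf {x : ℝ | q < F x})
    (Finv : ℝ → ℝ) (hFinv : ∀ γ : ℝ, Finv γ = sInf {x : ℝ | γ ≤ F x}) :
    (∫ ω in {ω | xq < X ω}, X ω ∂ℙ) / (1 - q) =
      (1 / (1 - q)) * ∫ γ in q..1, Finv γ := by
  obtain ⟨hq0, hq1⟩ := hq
  set μ : Measure ℝ := ℙ.map X with hμ
  haveI : IsProbabilityMeasure μ := Measure.isProbabilityMeasure_map hX.aemeasurable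
  -- F is the cdf of μ
  have hFcdf : F = ProbabilityTheory.cdf μ := by
    funext x
    rw [hF x, ProbabilityTheory.cdf_eq_real, measureReal_def, hμ, Measure.map_apply hX measurableSet_Iic]
    rfl
  have hFmono : Monotone F := hFcdf ▸ ProbabilityTheory.monotone_cdf μ
  have hμIic : ∀ x, μ (Set.Iic x) = ENNReal.ofReal (F x) := by
    intro x
    rw [hFcdf, ← ProbabilityTheory.ofReal_cdf]
  have hF0 : ∀ x, 0 ≤ F x := fun x => hFcdf ▸ ProbabilityTheory.cdf_nonneg μ x
  have hF1 : ∀ x, F x ≤ 1 := fun x => hFcdf ▸ ProbabilityTheory.cdf_le_one μ x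
  have htop : Filter.Tendsto F Filter.atTop (nhds 1) :=
    hFcdf ▸ ProbabilityTheory.tendsto_cdf_atTop μ
  have hbot : Filter.Tendsto F Filter.atBot (nhds 0) :=
    hFcdf ▸ ProbabilityTheory.tendsto_cdf_atBot μ
  -- basic facts about level sets
  have hlt : ∀ γ : ℝ, γ > 0 → ∃ x, F x < γ := by
    intro γ hγ
    have := hbot.eventually (eventually_lt_nhds hγ)
    obtain ⟨x, hx⟩ := this.exists
    exact ⟨x, hx⟩
  have hgt : ∀ γ : ℝ, γ < 1 → ∃ x, γ < F x := by
    intro γ hγ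
    have := htop.eventually (eventually_gt_nhds hγ)
    obtain ⟨x, hx⟩ := this.exists
    exact ⟨x, hx⟩
  have hbdd : ∀ γ : ℝ, 0 < γ → BddBelow {x : ℝ | γ ≤ F x} := by
    intro γ hγ
    obtain ⟨x, hx⟩ := hlt γ hγ
    refine ⟨x, fun y hy => ?_⟩
    by_contra hxy
    push_neg at hxy
    exact absurd (le_trans hy (hFmono hxy.le)) (not_le.2 hx)
  have hne : ∀ γ : ℝ, γ < 1 → {x : ℝ | γ ≤ F x}.Nonempty := by
    intro γ hγ
    obtain ⟨x, hx⟩ := hgt γ hγ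
    exact ⟨x, hx.le⟩
  have hclosed : ∀ γ : ℝ, IsClosed {x : ℝ | γ ≤ F x} :=
    fun γ => isClosed_le continuous_const hFcont
  -- F (Finv γ) ≥ γ for γ ∈ (0,1)
  have hFFinv : ∀ γ : ℝ, 0 < γ → γ < 1 → γ ≤ F (Finv γ) := by
    intro γ h0 h1
    rw [hFinv]
    exact (hclosed γ).csInf_mem (hne γ h1) (hbdd γ h0)
  -- Galois connection: for γ ∈ (0,1), Finv γ ≤ t ↔ γ ≤ F t
  have hgal : ∀ γ t : ℝ, 0 < γ → γ < 1 → (Finv γ ≤ t ↔ γ ≤ F t) := by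
    intro γ t h0 h1
    constructor
    · intro h
      exact le_trans (hFFinv γ h0 h1) (hFmono h)
    · intro h
      rw [hFinv]
      exact csInf_le (hbdd γ h0) h
  -- Finv is monotone on (0,1)
  have hFinvMono : MonotoneOn Finv (Set.Ioo (0:ℝ) 1) := by
    intro a ha b hb hab
    rw [hFinv a, hFinv b]
    exact csInf_le_csInf (hbdd a ha.1) (hne b hb.2) (fun x hx => le_trans hab hx)
  have hFinvAE : AEMeasurable Finv (volume.restrict (Set.Ioo (0:ℝ) 1)) :=
    aemeasurable_restrict_of_monotoneOn measurableSet_Ioo hFinvMono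
  -- pushforward of uniform under Finv is μ
  set ν : Measure ℝ := volume.restrict (Set.Ioo (0:ℝ) 1) with hν
  have hνmap : ν.map Finv = μ := by
    haveI : IsProbabilityMeasure ν := by
      constructor
      rw [hν, Measure.restrict_apply MeasurableSet.univ, Set.univ_inter, Real.volume_Ioo]
      norm_num
    haveI : IsFiniteMeasure (ν.map Finv) := by
      haveI : IsProbabilityMeasure (ν.map Finv) := Measure.isProbabilityMeasure_map hFinvAE
      infer_instance
    refine Measure.ext_of_Iic (ν.map Finv) μ (fun t => ?_)
    rw [Measure.map_apply_of_aemeasurable hFinvAE measurableSet_Iic, hν,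
      Measure.restrict_apply' measurableSet_Ioo]
    have hset : Finv ⁻¹' Set.Iic t ∩ Set.Ioo (0:ℝ) 1 = Set.Ioo 0 1 ∩ Set.Iic (F t) := by
      ext γ
      simp only [Set.mem_inter_iff, Set.mem_preimage, Set.mem_Iic, Set.mem_Ioo]
      constructor
      · rintro ⟨h1, h2, h3⟩
        exact ⟨⟨h2, h3⟩, (hgal γ t h2 h3).1 h1⟩
      · rintro ⟨⟨h2, h3⟩, h1⟩
        exact ⟨(hgal γ t h2 h3).2 h1, h2, h3⟩
    rw [hset, hμIic]
    rcases lt_or_ge (F t) 1 with h | h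
    · have : Set.Ioo (0:ℝ) 1 ∩ Set.Iic (F t) = Set.Ioc 0 (F t) := by
        ext γ
        simp only [Set.mem_inter_iff, Set.mem_Ioo, Set.mem_Iic, Set.mem_Ioc]
        exact ⟨fun ⟨⟨a, b⟩, c⟩ => ⟨a, c⟩, fun ⟨a, c⟩ => ⟨⟨a, lt_of_le_of_lt c h⟩, c⟩⟩
      rw [this, Real.volume_Ioc, sub_zero]
    · have h1 : F t = 1 := le_antisymm (hF1 t) h
      have : Set.Ioo (0:ℝ) 1 ∩ Set.Iic (F t) = Set.Ioo 0 1 := by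
        rw [h1]
        exact Set.inter_eq_left.2 (fun γ hγ => le_of_lt hγ.2)
      rw [this, Real.volume_Ioo, h1]
      norm_num
  -- F xq ≤ q
  have hFxq : F xq ≤ q := by
    by_contra h
    push_neg at h
    have hBne : {x : ℝ | q < F x}.Nonempty := hgt q hq1
    have hBbdd : BddBelow {x : ℝ | q < F x} := by
      obtain ⟨x, hx⟩ := hlt q hq0
      refine ⟨x, fun y hy => ?_⟩
      by_contra hxy
      push_neg at hxy
      exact absurd (lt_of_lt_of_le hy (hFmono hxy.le)) (not_lt.2 hx.le)
    -- continuity: F > q in a neighborhood of xq, so some point < xq is in the set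
    have : ∀ᶠ y in nhds xq, q < F y := (hFcont.continuousAt).eventually_const_lt h
    obtain ⟨ε, hε, hball⟩ := Metric.eventually_nhds_iff.1 this
    have hmem : xq - ε/2 ∈ {x : ℝ | q < F x} := by
      apply hball
      rw [Real.dist_eq, show xq - ε/2 - xq = -(ε/2) by ring, abs_neg,
        abs_of_pos (by linarith)]
      linarith
    have h2 := csInf_le hBbdd hmem
    rw [← hxq] at h2
    linarith
  -- the key preimage identity
  have hpre : Finv ⁻¹' Set.Ioi xq ∩ Set.Ioo (0:ℝ) 1 = Set.Ioo q 1 := by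
    ext γ
    simp only [Set.mem_inter_iff, Set.mem_preimage, Set.mem_Ioi, Set.mem_Ioo]
    constructor
    · rintro ⟨h1, h2, h3⟩
      refine ⟨?_, h3⟩
      by_contra hγq
      push_neg at hγq
      -- γ ≤ q ⟹ Finv γ ≤ xq
      have : Finv γ ≤ xq := by
        rw [hFinv, hxq]
        obtain ⟨z, hz⟩ := hgt q hq1
        exact csInf_le_csInf (hbdd γ h2) ⟨z, hz⟩
          (fun x hx => le_of_lt (lt_of_le_of_lt hγq hx))
      exact absurd h1 (not_lt.2 this)
    · rintro ⟨h1, h3⟩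
      have h2 : 0 < γ := lt_trans hq0 h1
      refine ⟨?_, h2, h3⟩
      have hFF : q < F (Finv γ) := lt_of_lt_of_le h1 (hFFinv γ h2 h3)
      by_contra hle
      push_neg at hle
      exact absurd (lt_of_lt_of_le hFF (hFmono hle)) (not_lt.2 hFxq)
  -- numerator computation
  have hnum : (∫ ω in {ω | xq < X ω}, X ω ∂ℙ) = ∫ γ in q..1, Finv γ := by
    have hid : AEStronglyMeasurable (fun x : ℝ => x) μ := aestronglyMeasurable_id
    have e1 : (∫ ω in {ω | xq < X ω}, X ω ∂ℙ) = ∫ x in Set.Ioi xq, x ∂μ := by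
      rw [hμ] at hid ⊢
      rw [setIntegral_map (f := fun x : ℝ => x) measurableSet_Ioi hid hX.aemeasurable]
      rfl
    have e2 : (∫ x in Set.Ioi xq, x ∂μ) = ∫ γ in Finv ⁻¹' Set.Ioi xq, Finv γ ∂ν := by
      rw [← hνmap] at hid ⊢
      rw [setIntegral_map (f := fun x : ℝ => x) measurableSet_Ioi hid hFinvAE]
    have e3 : ν.restrict (Finv ⁻¹' Set.Ioi xq) = volume.restrict (Set.Ioo q 1) := by
      rw [hν, Measure.restrict_restrict' measurableSet_Ioo, hpre]
    have e4 : (∫ γ in q..1, Finv γ) = ∫ γ in Set.Ioo q 1, Finv γ := by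
      rw [intervalIntegral.integral_of_le hq1.le, MeasureTheory.integral_Ioc_eq_integral_Ioo]
    rw [e1, e2, e4]
    rw [show (∫ γ in Finv ⁻¹' Set.Ioi xq, Finv γ ∂ν) = ∫ γ, Finv γ ∂(ν.restrict (Finv ⁻¹' Set.Ioi xq)) from rfl, e3]
  rw [hnum, div_eq_mul_inv, one_div, mul_comm]
end

section
/- Let X be an integrable real random variable whose cumulative distribution function F is continuous and strictly increasing, with quantile function F^{-1}. Let g : [0,1] -> [0,1] be a continuously differentiable increasing function with g(0) = 0 and g(1) = 1, and assume the integral from 0 to 1 of |F^{-1}(p)| * g'(1-p) dp is finite. Then the distortion risk measure equals the weighted risk measure with weight w(x) = g'(1 - F(x)): namely, the integral from 0 to 1 of F^{-1}(p) * g'(1-p) dp equals E[ X * g'(1 - F(X)) ] / E[ g'(1 - F(X)) ], and moreover E[ g'(1 - F(X)) ] = 1. -/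
open MeasureTheory

/-- **Distortion risk measures are weighted risk measures.** For `X` with continuous strictly
increasing cdf `F` and a continuously differentiable distortion function `g`, the distortion
risk measure `∫₀¹ F⁻¹(p) g'(1-p) dp` equals the weighted risk measure
`E[X g'(1-F(X))] / E[g'(1-F(X))]`, and moreover `E[g'(1-F(X))] = 1`. -/
theorem distortion_eq_weighted_risk_measure
    {Ω : Type*} [MeasurableSpace Ω] (ℙ : Measure Ω) [IsProbabilityMeasure ℙ]
    (X : Ω → ℝ) (hX : Measurable X) (hXint : Integrable X ℙ)
    (F : ℝ → ℝ) (hF : ∀ x, F x = (ℙ {ω | X ω ≤ x}).toReal)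
    (hFcont : Continuous F) (hFmono : StrictMono F)
    (Finv : ℝ → ℝ) (hFinv : ∀ p : ℝ, Finv p = sInf {x : ℝ | p ≤ F x})
    (g g' : ℝ → ℝ)
    (hg : ∀ p ∈ Set.Icc (0 : ℝ) 1, HasDerivAt g (g' p) p)
    (hg'cont : ContinuousOn g' (Set.Icc (0 : ℝ) 1))
    (hgmono : MonotoneOn g (Set.Icc (0 : ℝ) 1))
    (hg0 : g 0 = 0) (hg1 : g 1 = 1)
    (hint : IntervalIntegrable (fun p => |Finv p| * g' (1 - p)) volume 0 1) :
    (∫ p in (0 : ℝ)..1, Finv p * g' (1 - p)) =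
        (∫ ω, X ω * g' (1 - F (X ω)) ∂ℙ) / (∫ ω, g' (1 - F (X ω)) ∂ℙ) ∧
      (∫ ω, g' (1 - F (X ω)) ∂ℙ) = 1 := by
  classical
  set μ := ℙ.map X with hμdef
  haveI : IsProbabilityMeasure μ := Measure.isProbabilityMeasure_map hX.aemeasurable
  -- F is the cdf of μ
  have hFcdf : ∀ x, F x = ProbabilityTheory.cdf μ x := by
    intro x
    rw [ProbabilityTheory.cdf_eq_real, measureReal_def, hμdef, Measure.map_apply hX measurableSet_Iic, hF]
    rfl
  -- bounds on F
  have hF01 : ∀ x, F x ∈ Set.Icc (0:ℝ) 1 := by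
    intro x
    rw [hFcdf]
    exact ⟨ProbabilityTheory.cdf_nonneg μ x, ProbabilityTheory.cdf_le_one μ x⟩
  have hFIoo : ∀ x, F x ∈ Set.Ioo (0:ℝ) 1 := by
    intro x
    constructor
    · exact lt_of_le_of_lt (hF01 (x-1)).1 (hFmono (by linarith))
    · exact lt_of_lt_of_le (hFmono (show x < x+1 by linarith)) (hF01 (x+1)).2
  have htop : Filter.Tendsto F Filter.atTop (nhds 1) := by
    have : F = ProbabilityTheory.cdf μ := funext hFcdf
    rw [this]; exact ProbabilityTheory.tendsto_cdf_atTop μ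
  have hbot : Filter.Tendsto F Filter.atBot (nhds 0) := by
    have : F = ProbabilityTheory.cdf μ := funext hFcdf
    rw [this]; exact ProbabilityTheory.tendsto_cdf_atBot μ
  -- surjectivity onto (0,1)
  have hsurj : ∀ p ∈ Set.Ioo (0:ℝ) 1, ∃ x, F x = p := by
    intro p hp
    obtain ⟨a, ha⟩ := (hbot.eventually (eventually_lt_nhds hp.1)).exists
    obtain ⟨b, hb⟩ := (htop.eventually (eventually_gt_nhds hp.2)).exists
    have hab : a ≤ b := (hFmono.lt_iff_lt.1 (ha.trans hb)).le
    have := intermediate_value_Icc hab hFcont.continuousOn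
      (show p ∈ Set.Icc (F a) (F b) from ⟨ha.le, hb.le⟩)
    obtain ⟨x, _, hx⟩ := this
    exact ⟨x, hx⟩
  -- Finv (F x) = x
  have hFinvF : ∀ x, Finv (F x) = x := by
    intro x
    rw [hFinv]
    have : {y : ℝ | F x ≤ F y} = Set.Ici x := by
      ext y; simp [hFmono.le_iff_le]
    rw [this, csInf_Ici]
  have hFFinv : ∀ p ∈ Set.Ioo (0:ℝ) 1, F (Finv p) = p := by
    intro p hp
    obtain ⟨x, hx⟩ := hsurj p hp
    rw [← hx, hFinvF]
  -- monotone on (0,1)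
  have hmonoInv : MonotoneOn Finv (Set.Ioo (0:ℝ) 1) := by
    intro p hp q hq hpq
    obtain ⟨x, hx⟩ := hsurj p hp
    obtain ⟨y, hy⟩ := hsurj q hq
    rw [← hx, ← hy, hFinvF, hFinvF]
    exact (hFmono.le_iff_le).1 (by rw [hx, hy]; exact hpq)
  have hInvMeas : AEMeasurable Finv (volume.restrict (Set.Ioo (0:ℝ) 1)) :=
    aemeasurable_restrict_of_monotoneOn measurableSet_Ioo hmonoInv
  -- μ equals the pushforward of Lebesgue on (0,1) by Finv
  set ν := (volume.restrict (Set.Ioo (0:ℝ) 1)).map Finv with hνdef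
  have hνIic : ∀ x, ν (Set.Iic x) = ENNReal.ofReal (F x) := by
    intro x
    rw [hνdef, Measure.map_apply_of_aemeasurable hInvMeas measurableSet_Iic,
      Measure.restrict_apply' measurableSet_Ioo]
    have hset : Finv ⁻¹' Set.Iic x ∩ Set.Ioo 0 1 = Set.Ioc 0 (F x) := by
      ext p
      simp only [Set.mem_inter_iff, Set.mem_preimage, Set.mem_Iic, Set.mem_Ioo, Set.mem_Ioc]
      constructor
      · rintro ⟨h1, h2, h3⟩
        refine ⟨h2, ?_⟩
        have := hFFinv p ⟨h2, h3⟩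
        calc p = F (Finv p) := this.symm
        _ ≤ F x := (hFmono.le_iff_le).2 h1
      · rintro ⟨h1, h2⟩
        have h3 : p < 1 := lt_of_le_of_lt h2 (hFIoo x).2
        refine ⟨?_, h1, h3⟩
        have := hFFinv p ⟨h1, h3⟩
        have : F (Finv p) ≤ F x := by rw [this]; exact h2
        exact (hFmono.le_iff_le).1 this
    rw [hset, Real.volume_Ioc, sub_zero]
  have hμIic : ∀ x, μ (Set.Iic x) = ENNReal.ofReal (F x) := by
    intro x
    rw [← ProbabilityTheory.ofReal_cdf μ x, hFcdf]
  haveI : IsFiniteMeasure μ := inferInstance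
  have hμν : μ = ν := by
    refine Measure.ext_of_Iic μ ν (fun x => ?_)
    rw [hμIic, hνIic]
  -- continuity of the weight functions
  have hmaps : ∀ x, 1 - F x ∈ Set.Icc (0:ℝ) 1 := by
    intro x
    have := hF01 x
    constructor <;> [linarith [this.2]; linarith [this.1]]
  have c1 : Continuous fun x : ℝ => g' (1 - F x) :=
    hg'cont.comp_continuous (continuous_const.sub hFcont) hmaps
  have c2 : Continuous fun x : ℝ => x * g' (1 - F x) := continuous_id.mul c1
  -- generic transfer lemma
  have key : ∀ f : ℝ → ℝ, Continuous f →
      (∫ ω, f (X ω) ∂ℙ) = ∫ p in Set.Ioo (0:ℝ) 1, f (Finv p) := by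
    intro f hf
    have h1 : (∫ ω, f (X ω) ∂ℙ) = ∫ x, f x ∂μ :=
      (integral_map hX.aemeasurable hf.aestronglyMeasurable).symm
    have h2 : (∫ x, f x ∂μ) = ∫ x, f x ∂ν := by rw [hμν]
    have h3 : (∫ x, f x ∂ν) = ∫ p in Set.Ioo (0:ℝ) 1, f (Finv p) := by
      rw [hνdef]
      exact integral_map hInvMeas hf.aestronglyMeasurable
    rw [h1, h2, h3]
  -- denominator
  have hden : (∫ ω, g' (1 - F (X ω)) ∂ℙ) = 1 := by
    have := key (fun x => g' (1 - F x)) c1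
    rw [this]
    have hcong : (∫ p in Set.Ioo (0:ℝ) 1, g' (1 - F (Finv p))) =
        ∫ p in Set.Ioo (0:ℝ) 1, g' (1 - p) := by
      refine setIntegral_congr_fun measurableSet_Ioo (fun p hp => ?_)
      rw [hFFinv p hp]
    rw [hcong, ← integral_Ioc_eq_integral_Ioo,
      ← intervalIntegral.integral_of_le (by norm_num : (0:ℝ) ≤ 1)]
    have hsub : (∫ p in (0:ℝ)..1, g' (1 - p)) = ∫ u in (0:ℝ)..1, g' u := by
      have := intervalIntegral.integral_comp_sub_left (a := (0:ℝ)) (b := 1) g' 1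
      simpa using this
    rw [hsub]
    have hIcc : Set.uIcc (0:ℝ) 1 = Set.Icc 0 1 := Set.uIcc_of_le (by norm_num)
    rw [intervalIntegral.integral_eq_sub_of_hasDerivAt
      (fun p hp => hg p (hIcc ▸ hp)) ((hg'cont.mono hIcc.subset).intervalIntegrable)]
    rw [hg1, hg0, sub_zero]
  -- numerator
  have hnum : (∫ p in (0:ℝ)..1, Finv p * g' (1 - p)) = ∫ ω, X ω * g' (1 - F (X ω)) ∂ℙ := by
    have := key (fun x => x * g' (1 - F x)) c2
    rw [this]
    have hcong : (∫ p in Set.Ioo (0:ℝ) 1, Finv p * g' (1 - F (Finv p))) =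
        ∫ p in Set.Ioo (0:ℝ) 1, Finv p * g' (1 - p) := by
      refine setIntegral_congr_fun measurableSet_Ioo (fun p hp => ?_)
      rw [hFFinv p hp]
    rw [hcong, ← integral_Ioc_eq_integral_Ioo,
      ← intervalIntegral.integral_of_le (by norm_num : (0:ℝ) ≤ 1)]
  refine ⟨?_, hden⟩
  rw [hden, div_one, hnum]
end

section
/- (Lemma 5.1, Mellin-Barnes form.) Let alpha > 0, b > 0, j > -1, x > 0, and fix c with 0 < c < j + 1. Then the Laplace transform of t |-> t^j * exp(-b * t^alpha) admits the vertical-line (Mellin-Barnes) integral representation: integral from 0 to infinity of exp(-x*t) * t^j * exp(-b*t^alpha) dt = (1 / (2*pi * alpha * b^{(j+1)/alpha})) * integral over y in R of Gamma(c + i*y) * Gamma( (j + 1 - c - i*y)/alpha ) * (x * b^{-1/alpha})^{-(c + i*y)} dy, where z^{w} for z > 0 denotes exp(w * log z). -/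
open MeasureTheory

namespace MB51Aux

open Set Complex

lemma cpow_ofReal_pos {r : ℝ} (hr : 0 < r) (w : ℂ) :
    (r : ℂ) ^ w = Complex.exp (w * (Real.log r : ℂ)) := by
  rw [Complex.cpow_def_of_ne_zero (Complex.ofReal_ne_zero.2 hr.ne'),
    ← Complex.ofReal_log hr.le, mul_comm]

lemma norm_Gamma_le {z : ℂ} (hz : 0 < z.re) : ‖Complex.Gamma z‖ ≤ Real.Gamma z.re := by
  rw [Complex.Gamma_eq_integral hz, Complex.GammaIntegral, Real.Gamma_eq_integral hz]
  calc ‖∫ t in Ioi (0:ℝ), ((Real.exp (-t) : ℝ) : ℂ) * (t:ℂ) ^ (z - 1)‖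
      ≤ ∫ t in Ioi (0:ℝ), ‖((Real.exp (-t) : ℝ) : ℂ) * (t:ℂ) ^ (z - 1)‖ :=
        norm_integral_le_integral_norm _
    _ = ∫ t in Ioi (0:ℝ), Real.exp (-t) * t ^ (z.re - 1) := by
        refine setIntegral_congr_fun measurableSet_Ioi fun t ht => ?_
        rw [norm_mul, Complex.norm_real, Real.norm_eq_abs,
          Complex.norm_cpow_eq_rpow_re_of_pos ht, _root_.abs_of_nonneg (Real.exp_pos _).le,
          Complex.sub_re, Complex.one_re]

lemma integrable_Gamma_line {c : ℝ} (hc : 0 < c) :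
    Integrable (fun y : ℝ => Complex.Gamma ((c : ℂ) + (y : ℂ) * Complex.I)) := by
  set m : ℝ := min (c ^ 2) 1 with hm_def
  have hm : 0 < m := lt_min (by positivity) one_pos
  have hcont : Continuous (fun y : ℝ => Complex.Gamma ((c : ℂ) + (y : ℂ) * Complex.I)) := by
    rw [continuous_iff_continuousAt]
    intro y
    have hpole : ∀ n : ℕ, (c : ℂ) + (y : ℂ) * Complex.I ≠ -n := by
      intro n h
      have h2 := congrArg Complex.re h
      simp at h2
      have : (0:ℝ) ≤ (n : ℝ) := Nat.cast_nonneg n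
      nlinarith
    have hin : ContinuousAt (fun y : ℝ => (c : ℂ) + (y : ℂ) * Complex.I) y := by fun_prop
    exact ContinuousAt.comp (g := Complex.Gamma) (f := fun y : ℝ => (c:ℂ) + (y:ℂ) * Complex.I)
      ((Complex.differentiableAt_Gamma _ hpole).continuousAt) hin
  refine Integrable.mono' ((integrable_inv_one_add_sq).const_mul (Real.Gamma (c + 2) / m))
    hcont.aestronglyMeasurable ?_
  filter_upwards with y
  set s : ℂ := (c : ℂ) + (y : ℂ) * Complex.I with hs_def
  have hre : s.re = c := by simp [hs_def]
  have him : s.im = y := by simp [hs_def]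
  have hs0 : s ≠ 0 := fun h => by rw [h] at hre; simp at hre; linarith
  have hs1 : s + 1 ≠ 0 := fun h => by
    have h2 := congrArg Complex.re h
    rw [Complex.add_re, hre, Complex.one_re, Complex.zero_re] at h2
    linarith
  have hG2 : Complex.Gamma (s + 2) = (s + 1) * (s * Complex.Gamma s) := by
    have h2 : s + 2 = s + 1 + 1 := by ring
    rw [h2, Complex.Gamma_add_one _ hs1, Complex.Gamma_add_one _ hs0]
  have habs : ‖s‖ * ‖s‖ = c ^ 2 + y ^ 2 := by
    rw [← pow_two, Complex.sq_norm, Complex.normSq_apply, hre, him]; ring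
  have habs1 : ‖s‖ ≤ ‖s + 1‖ := by
    rw [Complex.norm_def, Complex.norm_def]
    apply Real.sqrt_le_sqrt
    simp only [Complex.normSq_apply, hs_def, Complex.add_re, Complex.add_im, Complex.one_re,
      Complex.one_im, Complex.ofReal_re, Complex.ofReal_im, Complex.mul_re, Complex.mul_im,
      Complex.I_re, Complex.I_im]
    nlinarith
  have hkey : (c ^ 2 + y ^ 2) * ‖Complex.Gamma s‖ ≤ Real.Gamma (c + 2) := by
    have h4 : ‖Complex.Gamma (s + 2)‖ ≤ Real.Gamma (c + 2) := by
      have hre2 : (s + 2).re = c + 2 := by rw [Complex.add_re, hre]; norm_num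
      have h5 := norm_Gamma_le (z := s + 2) (by rw [hre2]; linarith)
      rwa [hre2] at h5
    calc (c ^ 2 + y ^ 2) * ‖Complex.Gamma s‖
        = (‖s‖ * ‖s‖) * ‖Complex.Gamma s‖ := by rw [habs]
      _ ≤ (‖s‖ * ‖s + 1‖) * ‖Complex.Gamma s‖ :=
          mul_le_mul_of_nonneg_right
            (mul_le_mul_of_nonneg_left habs1 (norm_nonneg s)) (norm_nonneg _)
      _ = ‖Complex.Gamma (s + 2)‖ := by
          rw [hG2]
          simp only [norm_mul]
          ring
      _ ≤ Real.Gamma (c + 2) := h4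
  have hmle : m * (1 + y ^ 2) ≤ c ^ 2 + y ^ 2 := by
    have h1 : m ≤ c ^ 2 := min_le_left _ _
    have h2 : m ≤ 1 := min_le_right _ _
    nlinarith
  have hΓpos : (0:ℝ) ≤ Real.Gamma (c + 2) := (Real.Gamma_pos_of_pos (by linarith)).le
  calc ‖Complex.Gamma s‖ ≤ Real.Gamma (c + 2) / (c ^ 2 + y ^ 2) := by
        rw [le_div_iff₀ (by positivity), mul_comm]; exact hkey
    _ ≤ Real.Gamma (c + 2) / (m * (1 + y ^ 2)) := by gcongr
    _ = Real.Gamma (c + 2) / m * (1 + y ^ 2)⁻¹ := by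
        rw [← div_div, div_eq_mul_inv (Real.Gamma (c + 2) / m)]

lemma line_re (c y : ℝ) : ((c : ℂ) + (y : ℂ) * Complex.I).re = c := by simp

lemma exp_eq_mellinBarnes {c : ℝ} (hc : 0 < c) {r : ℝ} (hr : 0 < r) :
    (∫ y : ℝ, (r : ℂ) ^ (-((c : ℂ) + (y : ℂ) * Complex.I)) *
        Complex.Gamma ((c : ℂ) + (y : ℂ) * Complex.I))
      = ((2 * Real.pi : ℝ) : ℂ) * ((Real.exp (-r) : ℝ) : ℂ) := by
  set f : ℝ → ℂ := fun t => ((Real.exp (-t) : ℝ) : ℂ) with hf_def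
  have hmel : ∀ s : ℂ, 0 < s.re → mellin f s = Complex.Gamma s := by
    intro s hs
    rw [Complex.Gamma_eq_integral hs, Complex.GammaIntegral, mellin]
    refine setIntegral_congr_fun measurableSet_Ioi fun t ht => ?_
    simp [hf_def, smul_eq_mul, mul_comm]
  have hconv : MellinConvergent f c := by
    have h := Complex.GammaIntegral_convergent (s := (c : ℂ)) (by simpa using hc)
    refine h.congr_fun (fun t ht => ?_) measurableSet_Ioi
    simp [hf_def, smul_eq_mul, mul_comm]
  have hvert : Complex.VerticalIntegrable (mellin f) c := by
    refine (integrable_Gamma_line hc).congr ?_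
    filter_upwards with y
    exact (hmel _ (by rw [line_re]; exact hc)).symm
  have hcont : ContinuousAt f r := Continuous.continuousAt (by fun_prop)
  have hinv := mellinInv_mellin_eq c f hr hconv hvert hcont
  rw [mellinInv] at hinv
  have h2 : (fun y : ℝ => (r : ℂ) ^ (-((c : ℂ) + (y : ℂ) * Complex.I)) •
      mellin f ((c : ℂ) + (y : ℂ) * Complex.I)) =
      fun y : ℝ => (r : ℂ) ^ (-((c : ℂ) + (y : ℂ) * Complex.I)) *
        Complex.Gamma ((c : ℂ) + (y : ℂ) * Complex.I) := by
    funext y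
    rw [smul_eq_mul, hmel _ (by rw [line_re]; exact hc)]
  rw [h2] at hinv
  rw [show ((Real.exp (-r) : ℝ) : ℂ) = f r from rfl, ← hinv, real_smul]
  have hπ : ((Real.pi : ℝ) : ℂ) ≠ 0 := Complex.ofReal_ne_zero.2 Real.pi_ne_zero
  push_cast
  field_simp
  simp only [mul_comm Complex.I]

lemma integral_cpow_mul_exp_neg_mul_rpow {α b : ℝ} (hα : 0 < α) (hb : 0 < b) {w : ℂ}
    (hw : -1 < w.re) :
    (∫ t in Ioi (0:ℝ), (t : ℂ) ^ w * ((Real.exp (-(b * t ^ α)) : ℝ) : ℂ))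
      = (1 / (b : ℂ)) ^ ((w + 1) / (α : ℂ)) * Complex.Gamma ((w + 1) / (α : ℂ)) / (α : ℂ) := by
  have hαc : (α : ℂ) ≠ 0 := Complex.ofReal_ne_zero.2 hα.ne'
  set a : ℂ := (w + 1) / (α : ℂ) with ha_def
  have hαa : (α : ℂ) * a = w + 1 := by rw [ha_def, mul_div_cancel₀ _ hαc]
  have ha : 0 < a.re := by
    have h1 : a.re = (w.re + 1) / α := by
      rw [ha_def, Complex.div_re]
      simp [Complex.normSq_ofReal, Complex.add_re, Complex.add_im, Complex.one_re, Complex.one_im]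
      field_simp
    rw [h1]
    have : 0 < w.re + 1 := by linarith
    positivity
  have key := integral_comp_rpow_Ioi
    (fun u : ℝ => (u : ℂ) ^ (a - 1) * Complex.exp (-((b : ℂ) * (u : ℂ)))) (p := α) hα.ne'
  have hcong : ∀ t ∈ Ioi (0:ℝ),
      (|α| * t ^ (α - 1)) • (((t ^ α : ℝ) : ℂ) ^ (a - 1) *
        Complex.exp (-((b : ℂ) * ((t ^ α : ℝ) : ℂ))))
      = (α : ℂ) * ((t : ℂ) ^ w * ((Real.exp (-(b * t ^ α)) : ℝ) : ℂ)) := by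
    intro t ht
    have ht' : (0:ℝ) < t := ht
    have ht0 : (t : ℂ) ≠ 0 := Complex.ofReal_ne_zero.2 ht'.ne'
    have h1 : ((t ^ α : ℝ) : ℂ) ^ (a - 1) = (t : ℂ) ^ ((α : ℂ) * (a - 1)) :=
      (Complex.cpow_mul_ofReal_nonneg ht'.le α (a - 1)).symm
    have h2 : Complex.exp (-((b : ℂ) * ((t ^ α : ℝ) : ℂ))) = ((Real.exp (-(b * t ^ α)) : ℝ) : ℂ) := by
      rw [Complex.ofReal_exp]; push_cast; ring_nf
    have hexp : ((α - 1 : ℝ) : ℂ) + (α : ℂ) * (a - 1) = w := by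
      push_cast
      rw [mul_sub, hαa]
      ring
    have hpow : (t : ℂ) ^ ((α - 1 : ℝ) : ℂ) * (t : ℂ) ^ ((α : ℂ) * (a - 1)) = (t : ℂ) ^ w := by
      rw [← Complex.cpow_add _ _ ht0, hexp]
    rw [real_smul, abs_of_pos hα, h1, h2, Complex.ofReal_mul, Complex.ofReal_cpow ht'.le,
      ← hpow]
    ring
  rw [setIntegral_congr_fun measurableSet_Ioi hcong, integral_const_mul,
    Complex.integral_cpow_mul_exp_neg_mul_Ioi ha hb] at key
  rw [eq_div_iff hαc, mul_comm]
  exact key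

lemma integrableOn_rpow_mul_exp_neg_mul_rpow_Ioi {α b q : ℝ} (hα : 0 < α) (hb : 0 < b)
    (hq : -1 < q) :
    IntegrableOn (fun t : ℝ => t ^ q * Real.exp (-(b * t ^ α))) (Ioi (0:ℝ)) := by
  set s : ℝ := (q + 1) / α with hs_def
  have hs : 0 < s := div_pos (by linarith) hα
  have hαs : α * s = q + 1 := by rw [hs_def, mul_div_cancel₀ _ hα.ne']
  have h1 : IntegrableOn (fun u : ℝ => Real.exp (-u) * u ^ (s - 1)) (Ioi (0:ℝ)) :=
    Real.GammaIntegral_convergent hs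
  have h2 : IntegrableOn (fun u : ℝ => Real.exp (-(b * u)) * (b * u) ^ (s - 1)) (Ioi (0:ℝ)) := by
    have := (integrableOn_Ioi_comp_mul_left_iff
      (fun u : ℝ => Real.exp (-u) * u ^ (s - 1)) 0 hb).2 (by rwa [mul_zero])
    exact this
  have h3 : IntegrableOn
      (fun u : ℝ => b ^ (1 - s) * (Real.exp (-(b * u)) * (b * u) ^ (s - 1))) (Ioi (0:ℝ)) :=
    h2.const_mul _
  have hbb : b ^ (1 - s) * b ^ (s - 1) = 1 := by
    rw [← Real.rpow_add hb]; norm_num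
  have h4 : IntegrableOn (fun u : ℝ => Real.exp (-(b * u)) * u ^ (s - 1)) (Ioi (0:ℝ)) := by
    refine h3.congr_fun (fun u hu => ?_) measurableSet_Ioi
    have hu' : (0:ℝ) < u := hu
    beta_reduce
    rw [Real.mul_rpow hb.le hu'.le]
    calc b ^ (1 - s) * (Real.exp (-(b * u)) * (b ^ (s - 1) * u ^ (s - 1)))
        = (b ^ (1 - s) * b ^ (s - 1)) * (Real.exp (-(b * u)) * u ^ (s - 1)) := by ring
      _ = Real.exp (-(b * u)) * u ^ (s - 1) := by rw [hbb, one_mul]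
  have h5 := (integrableOn_Ioi_comp_rpow_iff'
    (fun u : ℝ => Real.exp (-(b * u)) * u ^ (s - 1)) (p := α) hα.ne').2 h4
  refine h5.congr_fun (fun t ht => ?_) measurableSet_Ioi
  have ht' : (0:ℝ) < t := ht
  beta_reduce
  rw [smul_eq_mul]
  calc t ^ (α - 1) * (Real.exp (-(b * t ^ α)) * (t ^ α) ^ (s - 1))
      = (t ^ (α - 1) * t ^ (α * (s - 1))) * Real.exp (-(b * t ^ α)) := by
        rw [← Real.rpow_mul ht'.le]
        ring
    _ = t ^ q * Real.exp (-(b * t ^ α)) := by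
        rw [← Real.rpow_add ht']
        congr 2
        rw [mul_sub]
        linarith

end MB51Aux

open Set in
/-- **Lemma 5.1 (Mellin–Barnes form).** For `α > 0`, `b > 0`, `j > -1`, `x > 0` and
`0 < c < j + 1`, the Laplace transform of `t ↦ t^j exp(-b t^α)` has the vertical-line
Mellin–Barnes representation at abscissa `c`. -/
theorem laplace_rpow_exp_neg_rpow_mellinBarnes
    (α b j x c : ℝ) (hα : 0 < α) (hb : 0 < b) (hj : -1 < j) (hx : 0 < x)
    (hc₀ : 0 < c) (hc₁ : c < j + 1) :
    ((∫ t in Set.Ioi (0 : ℝ), Real.exp (-x * t) * t ^ j * Real.exp (-b * t ^ α) : ℝ) : ℂ) =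
      ((1 / (2 * Real.pi * α * b ^ ((j + 1) / α)) : ℝ) : ℂ) *
        ∫ y : ℝ, Complex.Gamma (c + y * Complex.I) *
          Complex.Gamma ((j + 1 - c - y * Complex.I) / α) *
          ((x * b ^ (-(1 / α)) : ℝ) : ℂ) ^ (-(c + y * Complex.I)) := by
  have hαc : (α : ℂ) ≠ 0 := Complex.ofReal_ne_zero.2 hα.ne'
  have hu : (0:ℝ) < x * b ^ (-(1 / α)) := by positivity
  set F : ℝ → ℝ → ℂ := fun y t =>
    Complex.Gamma ((c:ℂ) + (y:ℂ) * Complex.I) *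
      ((x * t : ℝ) : ℂ) ^ (-((c:ℂ) + (y:ℂ) * Complex.I)) *
      ((t ^ j * Real.exp (-(b * t ^ α)) : ℝ) : ℂ) with hF_def
  -- Step A: pointwise identity for the Mellin–Barnes integrand
  have hpoint : ∀ y : ℝ,
      Complex.Gamma ((c:ℂ) + (y:ℂ) * Complex.I) *
        Complex.Gamma (((j:ℂ) + 1 - (c:ℂ) - (y:ℂ) * Complex.I) / (α:ℂ)) *
        ((x * b ^ (-(1 / α)) : ℝ) : ℂ) ^ (-((c:ℂ) + (y:ℂ) * Complex.I))
      = (α : ℂ) * ((b ^ ((j + 1) / α) : ℝ) : ℂ) * ∫ t in Ioi (0:ℝ), F y t := by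
    intro y
    set s : ℂ := (c:ℂ) + (y:ℂ) * Complex.I with hs_def
    set z : ℂ := ((j:ℂ) - s + 1) / (α:ℂ) with hz_def
    have hsre : s.re = c := by simp [hs_def]
    have hw : -1 < ((j:ℂ) - s).re := by
      rw [Complex.sub_re, hsre, Complex.ofReal_re]; linarith
    set I₀ : ℂ := ∫ t in Ioi (0:ℝ), (t : ℂ) ^ ((j:ℂ) - s) * ((Real.exp (-(b * t ^ α)) : ℝ) : ℂ)
      with hI₀_def
    have hD : I₀ = (1 / (b : ℂ)) ^ z * Complex.Gamma z / (α : ℂ) :=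
      MB51Aux.integral_cpow_mul_exp_neg_mul_rpow hα hb hw
    have hbarg : (b : ℂ).arg ≠ Real.pi := by
      rw [Complex.arg_ofReal_of_nonneg hb.le]; exact Real.pi_ne_zero.symm
    have hbz : ((b : ℂ)) ^ z ≠ 0 := by
      rw [Ne, Complex.cpow_eq_zero_iff, not_and_or]
      exact Or.inl (Complex.ofReal_ne_zero.2 hb.ne')
    have h1b : (1 / (b : ℂ)) ^ z = ((b : ℂ) ^ z)⁻¹ := by
      rw [one_div, Complex.inv_cpow _ _ hbarg]
    have hGz : Complex.Gamma z = (α : ℂ) * ((b : ℂ)) ^ z * I₀ := by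
      rw [hD, h1b]
      field_simp
    have hzz : ((j:ℂ) + 1 - (c:ℂ) - (y:ℂ) * Complex.I) / (α:ℂ) = z := by
      rw [hz_def, hs_def]; ring_nf
    have hC1 : ((b : ℂ)) ^ z * ((x * b ^ (-(1 / α)) : ℝ) : ℂ) ^ (-s)
        = ((b ^ ((j + 1) / α) : ℝ) : ℂ) * ((x : ℝ) : ℂ) ^ (-s) := by
      rw [MB51Aux.cpow_ofReal_pos hb z, MB51Aux.cpow_ofReal_pos hu (-s),
        MB51Aux.cpow_ofReal_pos hx (-s), Complex.ofReal_cpow hb.le,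
        MB51Aux.cpow_ofReal_pos hb]
      rw [← Complex.exp_add, ← Complex.exp_add]
      congr 1
      have hlog : Real.log (x * b ^ (-(1 / α))) = Real.log x + (-(1 / α)) * Real.log b := by
        rw [Real.log_mul hx.ne' (by positivity), Real.log_rpow hb]
      rw [hlog, hz_def, hs_def]
      push_cast
      field_simp
      ring
    have hC2 : (∫ t in Ioi (0:ℝ), F y t)
        = Complex.Gamma s * ((x : ℝ) : ℂ) ^ (-s) * I₀ := by
      rw [hI₀_def, ← integral_const_mul]
      refine setIntegral_congr_fun measurableSet_Ioi fun t ht => ?_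
      have ht' : (0:ℝ) < t := ht
      have ht0 : (t : ℂ) ≠ 0 := Complex.ofReal_ne_zero.2 ht'.ne'
      rw [hF_def]
      simp only []
      rw [Complex.ofReal_mul x t, Complex.mul_cpow_ofReal_nonneg hx.le ht'.le,
        Complex.ofReal_mul (t ^ j), Complex.ofReal_cpow ht'.le,
        show (j:ℂ) - s = (j:ℂ) + (-s) by ring, Complex.cpow_add _ _ ht0]
      ring
    calc Complex.Gamma s * Complex.Gamma (((j:ℂ) + 1 - (c:ℂ) - (y:ℂ) * Complex.I) / (α:ℂ)) *
          ((x * b ^ (-(1 / α)) : ℝ) : ℂ) ^ (-s)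
        = Complex.Gamma s * ((α : ℂ) * ((b : ℂ)) ^ z * I₀) *
            ((x * b ^ (-(1 / α)) : ℝ) : ℂ) ^ (-s) := by rw [hzz, hGz]
      _ = (α : ℂ) * I₀ * Complex.Gamma s *
            (((b : ℂ)) ^ z * ((x * b ^ (-(1 / α)) : ℝ) : ℂ) ^ (-s)) := by ring
      _ = (α : ℂ) * I₀ * Complex.Gamma s *
            (((b ^ ((j + 1) / α) : ℝ) : ℂ) * ((x : ℝ) : ℂ) ^ (-s)) := by rw [hC1]
      _ = (α : ℂ) * ((b ^ ((j + 1) / α) : ℝ) : ℂ) *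
            (Complex.Gamma s * ((x : ℝ) : ℂ) ^ (-s) * I₀) := by ring
      _ = _ := by rw [← hC2]
  -- Integrability of the double integrand
  have hF_int : Integrable (Function.uncurry F)
      ((volume : Measure ℝ).prod (volume.restrict (Ioi (0:ℝ)))) := by
    have hh : IntegrableOn (fun t : ℝ => x ^ (-c) * (t ^ (j - c) * Real.exp (-(b * t ^ α))))
        (Ioi (0:ℝ)) :=
      (MB51Aux.integrableOn_rpow_mul_exp_neg_mul_rpow_Ioi hα hb (by linarith)).const_mul _
    have hbound : Integrable (fun p : ℝ × ℝ =>
        ‖Complex.Gamma ((c:ℂ) + (p.1:ℂ) * Complex.I)‖ *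
          (x ^ (-c) * (p.2 ^ (j - c) * Real.exp (-(b * p.2 ^ α)))))
        ((volume : Measure ℝ).prod (volume.restrict (Ioi (0:ℝ)))) :=
      Integrable.mul_prod (MB51Aux.integrable_Gamma_line hc₀).norm hh
    have hmeas : AEStronglyMeasurable (Function.uncurry F)
        ((volume : Measure ℝ).prod (volume.restrict (Ioi (0:ℝ)))) := by
      have hres : (volume : Measure ℝ).prod (volume.restrict (Ioi (0:ℝ)))
          = ((volume : Measure ℝ).prod (volume : Measure ℝ)).restrict
              ((Set.univ : Set ℝ) ×ˢ Ioi (0:ℝ)) := by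
        rw [← Measure.prod_restrict, Measure.restrict_univ]
      rw [hres]
      refine ContinuousOn.aestronglyMeasurable ?_ (MeasurableSet.univ.prod measurableSet_Ioi)
      intro p hp
      have ht : (0:ℝ) < p.2 := hp.2
      apply ContinuousAt.continuousWithinAt
      have hG : ContinuousAt (fun p : ℝ × ℝ => Complex.Gamma ((c:ℂ) + (p.1:ℂ) * Complex.I)) p := by
        have hpole : ∀ n : ℕ, (c : ℂ) + (p.1 : ℂ) * Complex.I ≠ -n := by
          intro n h
          have h2 := congrArg Complex.re h
          simp at h2
          have : (0:ℝ) ≤ (n : ℝ) := Nat.cast_nonneg n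
          nlinarith
        exact ContinuousAt.comp (g := Complex.Gamma)
          (f := fun p : ℝ × ℝ => (c:ℂ) + (p.1:ℂ) * Complex.I)
          ((Complex.differentiableAt_Gamma _ hpole).continuousAt) (by fun_prop)
      have hcpow : ContinuousAt (fun p : ℝ × ℝ =>
          ((x * p.2 : ℝ) : ℂ) ^ (-((c:ℂ) + (p.1:ℂ) * Complex.I))) p := by
        have hsp : (((x * p.2 : ℝ) : ℂ), -((c:ℂ) + (p.1:ℂ) * Complex.I)).1 ∈ Complex.slitPlane :=
          Complex.ofReal_mem_slitPlane.2 (mul_pos hx ht)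
        exact ContinuousAt.comp (g := fun q : ℂ × ℂ => q.1 ^ q.2)
          (f := fun p : ℝ × ℝ => (((x * p.2 : ℝ) : ℂ), -((c:ℂ) + (p.1:ℂ) * Complex.I)))
          (continuousAt_cpow hsp) (by fun_prop)
      have hreal : ContinuousAt (fun p : ℝ × ℝ =>
          ((p.2 ^ j * Real.exp (-(b * p.2 ^ α)) : ℝ) : ℂ)) p := by
        have h1 : ContinuousAt (fun t : ℝ => t ^ j * Real.exp (-(b * t ^ α))) p.2 := by
          apply ContinuousAt.mul
          · exact Real.continuousAt_rpow_const _ _ (Or.inl ht.ne')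
          · exact (Real.continuous_exp.continuousAt).comp
              (((continuousAt_const.mul (Real.continuousAt_rpow_const _ _ (Or.inl ht.ne')))).neg)
        exact (Complex.continuous_ofReal.continuousAt.comp h1).comp continuous_snd.continuousAt
      exact (hG.mul hcpow).mul hreal
    have hae : ∀ᵐ p : ℝ × ℝ ∂((volume : Measure ℝ).prod (volume.restrict (Ioi (0:ℝ)))),
        p.2 ∈ Ioi (0:ℝ) := by
      rw [ae_iff]
      have hset : {p : ℝ × ℝ | ¬ p.2 ∈ Ioi (0:ℝ)} = (Set.univ : Set ℝ) ×ˢ (Ioi (0:ℝ))ᶜ := by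
        ext p; simp
      rw [hset, Measure.prod_prod, Measure.restrict_apply measurableSet_Ioi.compl]
      have h0 : (Ioi (0:ℝ))ᶜ ∩ Ioi 0 ⊆ ∅ := fun t ⟨h1, h2⟩ => absurd h2 h1
      rw [measure_mono_null h0 measure_empty, mul_zero]
    refine hbound.mono' hmeas ?_
    filter_upwards [hae] with p hp
    have ht : (0:ℝ) < p.2 := hp
    have hxt : (0:ℝ) < x * p.2 := mul_pos hx ht
    simp only [Function.uncurry, hF_def]
    rw [norm_mul, norm_mul]
    have h1 : ‖((x * p.2 : ℝ) : ℂ) ^ (-((c:ℂ) + (p.1:ℂ) * Complex.I))‖ = (x * p.2) ^ (-c) := by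
      rw [Complex.norm_cpow_eq_rpow_re_of_pos hxt]
      congr 1
      simp
    have h2 : ‖((p.2 ^ j * Real.exp (-(b * p.2 ^ α)) : ℝ) : ℂ)‖
        = p.2 ^ j * Real.exp (-(b * p.2 ^ α)) := by
      rw [Complex.norm_real, Real.norm_eq_abs, _root_.abs_of_nonneg]
      positivity
    rw [h1, h2]
    apply le_of_eq
    rw [Real.mul_rpow hx.le ht.le, show j - c = j + (-c) by ring, Real.rpow_add ht]
    ring
  -- Swap and evaluate
  have hswap : (∫ y : ℝ, ∫ t in Ioi (0:ℝ), F y t) = ∫ t in Ioi (0:ℝ), ∫ y : ℝ, F y t :=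
    integral_integral_swap hF_int
  have hinner : ∀ t ∈ Ioi (0:ℝ), (∫ y : ℝ, F y t)
      = ((2 * Real.pi : ℝ) : ℂ) *
        ((Real.exp (-x * t) * t ^ j * Real.exp (-b * t ^ α) : ℝ) : ℂ) := by
    intro t ht
    have ht' : (0:ℝ) < t := ht
    have hxt : (0:ℝ) < x * t := mul_pos hx ht'
    have hMB := MB51Aux.exp_eq_mellinBarnes hc₀ hxt
    calc (∫ y : ℝ, F y t)
        = ∫ y : ℝ, ((t ^ j * Real.exp (-(b * t ^ α)) : ℝ) : ℂ) *
            (((x * t : ℝ) : ℂ) ^ (-((c:ℂ) + (y:ℂ) * Complex.I)) *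
              Complex.Gamma ((c:ℂ) + (y:ℂ) * Complex.I)) := by
          congr 1
          funext y
          rw [hF_def]
          ring
      _ = ((t ^ j * Real.exp (-(b * t ^ α)) : ℝ) : ℂ) *
            ∫ y : ℝ, ((x * t : ℝ) : ℂ) ^ (-((c:ℂ) + (y:ℂ) * Complex.I)) *
              Complex.Gamma ((c:ℂ) + (y:ℂ) * Complex.I) := integral_const_mul _ _
      _ = ((2 * Real.pi : ℝ) : ℂ) *
            ((Real.exp (-x * t) * t ^ j * Real.exp (-b * t ^ α) : ℝ) : ℂ) := by
          rw [hMB]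
          push_cast
          ring_nf
  have hfinal : (∫ t in Ioi (0:ℝ), ∫ y : ℝ, F y t)
      = ((2 * Real.pi : ℝ) : ℂ) *
        ((∫ t in Ioi (0:ℝ), Real.exp (-x * t) * t ^ j * Real.exp (-b * t ^ α) : ℝ) : ℂ) := by
    rw [setIntegral_congr_fun measurableSet_Ioi hinner, integral_const_mul]
    congr 1
    exact integral_ofReal
  -- Put everything together
  rw [integral_congr_ae (Filter.Eventually.of_forall hpoint), integral_const_mul, hswap, hfinal]
  have hπ : ((Real.pi : ℝ) : ℂ) ≠ 0 := Complex.ofReal_ne_zero.2 Real.pi_ne_zero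
  have hbp : ((b ^ ((j + 1) / α) : ℝ) : ℂ) ≠ 0 :=
    Complex.ofReal_ne_zero.2 (Real.rpow_pos_of_pos hb _).ne'
  push_cast
  field_simp
end

section
/- (Theorem 5.3, integral form.) Fix alpha in (1,2) and beta in [-1,1], sigma > 0, and set xi = sigma^alpha * (1 - i*beta*tan(pi*alpha/2)). Define the stable density by Fourier inversion: f(s) = (1/pi) * Re[ integral from 0 to infinity of exp( -i*t*s - t^alpha * xi ) dt ]. Then for every threshold s_q > 0, the partial first moment over the tail satisfies: integral from s_q to infinity of s * f(s) ds = (alpha/pi) * Re[ xi * integral from 0 to infinity of t^{alpha - 2} * exp( -i*s_q*t - t^alpha * xi ) dt ]. Consequently, if S is a random variable with density f and cdf F, and s_q is the q-quantile (F(s_q) = q), then the Tail Conditional Expectation is TCE_q[S] = (alpha / (pi*(1-q))) * Re[ xi * integral from 0 to infinity of t^{alpha - 2} * exp( -i*s_q*t - t^alpha*xi ) dt ]. -/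
open MeasureTheory Set Filter Topology

noncomputable section StableAux

namespace StableAux

variable (α : ℝ) (ξ : ℂ)

/-- The factor `exp(-t^α ξ)`. -/
def G (t : ℝ) : ℂ := Complex.exp (-((t ^ α : ℝ) : ℂ) * ξ)

/-- The oscillating factor `exp(-i t s)`. -/
def osc (s t : ℝ) : ℂ := Complex.exp (-Complex.I * t * s)

lemma norm_osc (s t : ℝ) : ‖osc s t‖ = 1 := by
  rw [osc, Complex.norm_exp]
  have : (-Complex.I * (t:ℂ) * (s:ℂ)).re = 0 := by simp
  rw [this, Real.exp_zero]

lemma norm_G (t : ℝ) : ‖G α ξ t‖ = Real.exp (-ξ.re * t ^ α) := by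
  rw [G, Complex.norm_exp]
  congr 1
  simp [Complex.mul_re]
  ring

lemma E_eq (s t : ℝ) :
    Complex.exp (-Complex.I * t * s - ((t ^ α : ℝ) : ℂ) * ξ) = osc s t * G α ξ t := by
  rw [osc, G, ← Complex.exp_add]; ring_nf

lemma norm_E (s t : ℝ) :
    ‖Complex.exp (-Complex.I * t * s - ((t ^ α : ℝ) : ℂ) * ξ)‖ = Real.exp (-ξ.re * t ^ α) := by
  rw [E_eq, norm_mul, norm_osc, one_mul, norm_G]

variable {α ξ}

lemma continuousOn_G (hα : 0 < α) : Continuous (G α ξ) := by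
  apply Complex.continuous_exp.comp
  exact (continuous_neg.comp
    (Complex.continuous_ofReal.comp (Real.continuous_rpow_const hα.le))).mul continuous_const

lemma continuousOn_rpow (c : ℝ) : ContinuousOn (fun t : ℝ => t ^ c) (Ioi 0) := fun t ht =>
  (Real.continuousAt_rpow_const t c (Or.inl (ne_of_gt ht))).continuousWithinAt

/-- Workhorse integrability lemma. -/
lemma integrableOn_rpow_G (hα : 1 < α) (hr : 0 < ξ.re) {c : ℝ} (hc : -1 < c) (s : ℝ) :
    IntegrableOn (fun t : ℝ => ((t ^ c : ℝ) : ℂ) * (osc s t * G α ξ t)) (Ioi 0) := by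
  have hmeas : AEStronglyMeasurable (fun t : ℝ => ((t ^ c : ℝ) : ℂ) * (osc s t * G α ξ t))
      (volume.restrict (Ioi 0)) := by
    apply ContinuousOn.aestronglyMeasurable _ measurableSet_Ioi
    apply ContinuousOn.mul (Complex.continuous_ofReal.comp_continuousOn (continuousOn_rpow c))
    apply ContinuousOn.mul _ (continuousOn_G (by linarith)).continuousOn
    · exact (Complex.continuous_exp.comp
        ((continuous_const.mul Complex.continuous_ofReal).mul continuous_const)).continuousOn
  refine Integrable.mono' (g := fun t : ℝ => t ^ c * Real.exp (-ξ.re * t ^ α))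
    (integrableOn_rpow_mul_exp_neg_mul_rpow hc (by linarith) hr) hmeas ?_
  filter_upwards [ae_restrict_mem measurableSet_Ioi] with t ht
  rw [norm_mul, norm_mul, norm_osc, one_mul, norm_G, Complex.norm_real,
    Real.norm_eq_abs, abs_of_nonneg (Real.rpow_nonneg ht.le c)]

lemma hasDerivAt_osc (s t : ℝ) :
    HasDerivAt (fun t : ℝ => osc s t) (-Complex.I * s * osc s t) t := by
  have h1 : HasDerivAt (fun t : ℝ => -Complex.I * (t : ℂ) * (s : ℂ)) (-Complex.I * s) t := by
    simpa using (((hasDerivAt_id t).ofReal_comp).const_mul (-Complex.I)).mul_const (s : ℂ)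
  simpa [osc, mul_comm] using h1.cexp

lemma hasDerivAt_G {t : ℝ} (ht : 0 < t) :
    HasDerivAt (G α ξ) (-((α * t ^ (α - 1) : ℝ) : ℂ) * ξ * G α ξ t) t := by
  have h1 : HasDerivAt (fun t : ℝ => -((t ^ α : ℝ) : ℂ) * ξ)
      (-((α * t ^ (α - 1) : ℝ) : ℂ) * ξ) t :=
    (((Real.hasDerivAt_rpow_const (Or.inl ht.ne')).ofReal_comp).neg).mul_const ξ
  have h2 := h1.cexp
  refine h2.congr_deriv ?_
  rw [G]; ring

lemma tendsto_rpow_mul_exp (hα : 1 < α) {r : ℝ} (hr : 0 < r) (c : ℝ) :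
    Tendsto (fun t : ℝ => t ^ c * Real.exp (-r * t ^ α)) atTop (𝓝 0) := by
  have h := (rpow_mul_exp_neg_mul_rpow_isLittleO_exp_neg c hα hr).isBigO
  apply h.trans_tendsto
  have h1 : Tendsto (fun x : ℝ => (1 / 2) * x) atTop atTop :=
    Tendsto.const_mul_atTop (by norm_num) tendsto_id
  have h2 := Real.tendsto_exp_atBot.comp (tendsto_neg_atBot_iff.mpr h1)
  exact h2.congr fun x => by rw [Function.comp_apply, neg_mul]

lemma tendsto_rpow_G (hα : 1 < α) (hr : 0 < ξ.re) (c : ℝ) :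
    Tendsto (fun t : ℝ => ((t ^ c : ℝ) : ℂ) * G α ξ t) atTop (𝓝 0) := by
  rw [tendsto_zero_iff_norm_tendsto_zero]
  have heq : ∀ᶠ t : ℝ in atTop, t ^ c * Real.exp (-ξ.re * t ^ α)
      = ‖((t ^ c : ℝ) : ℂ) * G α ξ t‖ := by
    filter_upwards [eventually_gt_atTop (0:ℝ)] with t ht
    rw [norm_mul, norm_G, Complex.norm_real, Real.norm_eq_abs,
      abs_of_nonneg (Real.rpow_nonneg ht.le c)]
  exact (tendsto_rpow_mul_exp hα hr c).congr' heq

lemma tendsto_osc_mul {s : ℝ} {u : ℝ → ℂ} (hu : Tendsto u atTop (𝓝 0)) :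
    Tendsto (fun t : ℝ => osc s t * u t) atTop (𝓝 0) := by
  rw [tendsto_zero_iff_norm_tendsto_zero]
  have : (fun t : ℝ => ‖osc s t * u t‖) = fun t => ‖u t‖ := by
    funext t; rw [norm_mul, norm_osc, one_mul]
  rw [this, ← norm_zero (E := ℂ)]
  exact hu.norm

lemma Isne {s : ℝ} (hs : 0 < s) : Complex.I * (s : ℂ) ≠ 0 :=
  mul_ne_zero Complex.I_ne_zero (by exact_mod_cast hs.ne')

/-- Generic integration by parts on `(a, ∞)` against `exp(-its)`. -/
lemma ibp (a : ℝ) {s : ℝ} (hs : 0 < s) {u u' : ℝ → ℂ}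
    (hderiv : ∀ t ∈ Ioi a, HasDerivAt u (u' t) t)
    (hcont : ContinuousWithinAt u (Ici a) a)
    (hu0 : Tendsto u atTop (𝓝 0))
    (hint1 : IntegrableOn (fun t => osc s t * u t) (Ioi a) volume)
    (hint2 : IntegrableOn (fun t => osc s t * u' t) (Ioi a) volume) :
    ∫ t in Ioi a, osc s t * u t
      = osc s a * u a / (Complex.I * s)
        + (1 / (Complex.I * s)) * ∫ t in Ioi a, osc s t * u' t := by
  have hs' : (s : ℂ) ≠ 0 := by exact_mod_cast hs.ne'
  have hcne : (-Complex.I * (s:ℂ)) ≠ 0 := by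
    apply mul_ne_zero _ hs'
    simp [Complex.I_ne_zero]
  have hP : ∀ t ∈ Ioi a, HasDerivAt (fun t => osc s t * u t / (-Complex.I * (s:ℂ)))
      (osc s t * u t + osc s t * u' t / (-Complex.I * (s:ℂ))) t := by
    intro t ht
    have h0 := ((hasDerivAt_osc s t).mul (hderiv t ht)).div_const (-Complex.I * (s:ℂ))
    refine h0.congr_deriv ?_
    field_simp [Complex.I_ne_zero]
    ring
  have hPcont : ContinuousWithinAt (fun t => osc s t * u t / (-Complex.I * (s:ℂ)))
      (Ici a) a := by
    apply ContinuousWithinAt.div_const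
    exact ((Complex.continuous_exp.comp
      ((continuous_const.mul Complex.continuous_ofReal).mul
        continuous_const)).continuousWithinAt).mul hcont
  have hPint : IntegrableOn (fun t => osc s t * u t + osc s t * u' t / (-Complex.I * (s:ℂ)))
      (Ioi a) volume := hint1.add (hint2.div_const _)
  have hPtend : Tendsto (fun t => osc s t * u t / (-Complex.I * (s:ℂ))) atTop (𝓝 0) := by
    simpa using (tendsto_osc_mul hu0).div_const (-Complex.I * (s:ℂ))
  have key := integral_Ioi_of_hasDerivAt_of_tendsto hPcont hP hPint hPtend
  rw [integral_add hint1 (hint2.div_const _),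
    integral_div (-Complex.I * (s:ℂ)) (fun t => osc s t * u' t), zero_sub] at key
  have h3 : ∫ t in Ioi a, osc s t * u t
      = -(osc s a * u a / (-Complex.I * (s:ℂ)))
        - (∫ t in Ioi a, osc s t * u' t) / (-Complex.I * (s:ℂ)) := by
    rw [eq_sub_iff_add_eq]; exact key
  rw [h3]
  field_simp [Complex.I_ne_zero]
  ring

lemma tendsto_G (hα : 1 < α) (hr : 0 < ξ.re) : Tendsto (G α ξ) atTop (𝓝 0) := by
  have h := tendsto_rpow_G (ξ := ξ) hα hr 0
  simpa [Real.rpow_zero] using h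

lemma integrableOn_osc_G (hα : 1 < α) (hr : 0 < ξ.re) (s : ℝ) :
    IntegrableOn (fun t : ℝ => osc s t * G α ξ t) (Ioi 0) volume := by
  have h := integrableOn_rpow_G (ξ := ξ) hα hr (c := 0) (by norm_num) s
  simpa [Real.rpow_zero] using h

/-- First integration by parts: the basic inversion integral in terms of `J`. -/
lemma keyA (hα1 : 1 < α) (hα2 : α < 2) (hr : 0 < ξ.re) {s : ℝ} (hs : 0 < s) :
    ∫ t in Ioi 0, osc s t * G α ξ t
      = 1 / (Complex.I * s) - (α * ξ / (Complex.I * s)) *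
          ∫ t in Ioi 0, ((t ^ (α-1) : ℝ) : ℂ) * (osc s t * G α ξ t) := by
  have hα0 : (0:ℝ) < α := by linarith
  have hint2 : IntegrableOn
      (fun t => osc s t * (-((α * t ^ (α - 1) : ℝ) : ℂ) * ξ * G α ξ t)) (Ioi 0) volume := by
    have i1 : IntegrableOn
        (fun t => (-(α:ℂ) * ξ) * (((t ^ (α-1) : ℝ) : ℂ) * (osc s t * G α ξ t))) (Ioi 0) volume :=
      (integrableOn_rpow_G hα1 hr (c := α - 1) (by linarith) s).const_mul (-(α:ℂ) * ξ)
    exact i1.congr_fun (fun t _ => by push_cast; ring) measurableSet_Ioi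
  have h := ibp 0 hs (u := G α ξ)
    (u' := fun t => -((α * t ^ (α - 1) : ℝ) : ℂ) * ξ * G α ξ t)
    (fun t ht => hasDerivAt_G ht) (continuousOn_G hα0).continuousWithinAt
    (tendsto_G hα1 hr) (integrableOn_osc_G hα1 hr s) hint2
  rw [h]
  have h0 : osc s 0 * G α ξ 0 = 1 := by
    simp [osc, G, Real.zero_rpow (ne_of_gt hα0)]
  rw [h0]
  have hcongr : ∫ t in Ioi 0, osc s t * (-((α * t ^ (α - 1) : ℝ) : ℂ) * ξ * G α ξ t)
      = ∫ t in Ioi 0, (-(α:ℂ) * ξ) * (((t ^ (α-1) : ℝ) : ℂ) * (osc s t * G α ξ t)) :=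
    setIntegral_congr_fun measurableSet_Ioi (fun t _ => by push_cast; ring)
  rw [hcongr, integral_const_mul]
  ring

/-- The combination appearing as the derivative of `t ^ (α-1) * G t`. -/
def Hd (α : ℝ) (ξ : ℂ) (t : ℝ) : ℂ :=
  ((((α-1) * t ^ (α-2) : ℝ) : ℂ) - (α : ℂ) * ξ * ((t ^ (2*α-2) : ℝ) : ℂ)) * G α ξ t

lemma hasDerivAt_rpow_G (hα1 : 1 < α) {t : ℝ} (ht : 0 < t) :
    HasDerivAt (fun t : ℝ => ((t ^ (α-1) : ℝ) : ℂ) * G α ξ t) (Hd α ξ t) t := by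
  have h1 : HasDerivAt (fun t : ℝ => ((t ^ (α-1) : ℝ) : ℂ))
      (((α-1) * t ^ (α-1-1) : ℝ) : ℂ) t :=
    (Real.hasDerivAt_rpow_const (Or.inl ht.ne')).ofReal_comp
  have h2 := h1.mul (hasDerivAt_G (α := α) (ξ := ξ) ht)
  refine h2.congr_deriv ?_
  simp only [Hd]
  have e1 : α - 1 - 1 = α - 2 := by ring
  have e2 : t ^ (α-1) * t ^ (α-1) = t ^ (2*α-2) := by
    rw [← Real.rpow_add ht]; congr 1; ring
  rw [e1, ← e2]
  push_cast
  ring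

lemma integrableOn_osc_Hd (hα1 : 1 < α) (hα2 : α < 2) (hr : 0 < ξ.re) (s a : ℝ) (ha : 0 ≤ a) :
    IntegrableOn (fun t => osc s t * Hd α ξ t) (Ioi a) volume := by
  apply IntegrableOn.mono_set _ (Ioi_subset_Ioi ha)
  have i1 := (integrableOn_rpow_G (ξ := ξ) hα1 hr (c := α - 2) (by linarith) s).const_mul
    (((α:ℂ)-1))
  have i2 := (integrableOn_rpow_G (ξ := ξ) hα1 hr (c := 2*α - 2) (by linarith) s).const_mul
    ((α:ℂ) * ξ)
  have i3 : IntegrableOn (fun t => ((α:ℂ)-1) * (((t ^ (α-2) : ℝ) : ℂ) * (osc s t * G α ξ t))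
      - (α:ℂ) * ξ * (((t ^ (2*α-2) : ℝ) : ℂ) * (osc s t * G α ξ t))) (Ioi 0) volume := i1.sub i2
  refine i3.congr_fun (fun t _ => ?_) measurableSet_Ioi
  simp only [Hd]
  push_cast
  ring

/-- Second integration by parts: `J` in terms of the `Hd` integral. -/
lemma keyB (hα1 : 1 < α) (hα2 : α < 2) (hr : 0 < ξ.re) {s : ℝ} (hs : 0 < s) :
    ∫ t in Ioi 0, ((t ^ (α-1) : ℝ) : ℂ) * (osc s t * G α ξ t)
      = (1 / (Complex.I * s)) * ∫ t in Ioi 0, osc s t * Hd α ξ t := by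
  have hα0 : (0:ℝ) < α := by linarith
  have hint1 : IntegrableOn
      (fun t => osc s t * (((t ^ (α-1) : ℝ) : ℂ) * G α ξ t)) (Ioi 0) volume :=
    (integrableOn_rpow_G hα1 hr (c := α - 1) (by linarith) s).congr_fun
      (fun t _ => by ring) measurableSet_Ioi
  have hcont : ContinuousWithinAt (fun t : ℝ => ((t ^ (α-1) : ℝ) : ℂ) * G α ξ t) (Ici 0) 0 := by
    apply ContinuousWithinAt.mul _ (continuousOn_G hα0).continuousWithinAt
    exact (Complex.continuous_ofReal.continuousAt.comp
      (Real.continuousAt_rpow_const 0 (α-1) (Or.inr (by linarith)))).continuousWithinAt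
  have h := ibp 0 hs (u := fun t : ℝ => ((t ^ (α-1) : ℝ) : ℂ) * G α ξ t)
    (u' := Hd α ξ) (fun t ht => hasDerivAt_rpow_G hα1 ht) hcont
    (tendsto_rpow_G hα1 hr (α-1)) hint1 (integrableOn_osc_Hd hα1 hα2 hr s 0 le_rfl)
  have h0 : ((0:ℝ) ^ (α-1) : ℝ) = 0 := Real.zero_rpow (by intro hx; linarith [hx])
  rw [show (∫ t in Ioi 0, ((t ^ (α-1) : ℝ) : ℂ) * (osc s t * G α ξ t))
      = ∫ t in Ioi 0, osc s t * (((t ^ (α-1) : ℝ) : ℂ) * G α ξ t) from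
    setIntegral_congr_fun measurableSet_Ioi (fun t _ => by ring), h]
  simp [h0]

lemma hasDerivAt_osc_param (t s : ℝ) :
    HasDerivAt (fun s : ℝ => osc s t) (-Complex.I * t * osc s t) s := by
  have h1 : HasDerivAt (fun s : ℝ => -Complex.I * (t : ℂ) * (s : ℂ)) (-Complex.I * t) s := by
    simpa using ((hasDerivAt_id s).ofReal_comp).const_mul (-Complex.I * (t:ℂ))
  simpa [osc, mul_comm] using h1.cexp

/-- Differentiation under the integral sign. -/
lemma hasDerivAt_param (hα1 : 1 < α) (hr : 0 < ξ.re) {c : ℝ} (hc : -1 < c) (s : ℝ) :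
    HasDerivAt (fun s : ℝ => ∫ t in Ioi 0, ((t ^ c : ℝ) : ℂ) * (osc s t * G α ξ t))
      (∫ t in Ioi 0, (-Complex.I * t) * (((t ^ c : ℝ) : ℂ) * (osc s t * G α ξ t))) s := by
  have key := hasDerivAt_integral_of_dominated_loc_of_deriv_le (s := Metric.ball s 1) (x₀ := s)
    (F := fun s t => ((t ^ c : ℝ) : ℂ) * (osc s t * G α ξ t))
    (F' := fun s t => (-Complex.I * t) * (((t ^ c : ℝ) : ℂ) * (osc s t * G α ξ t)))
    (bound := fun t => t ^ (c+1) * Real.exp (-ξ.re * t ^ α))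
    (μ := volume.restrict (Ioi 0)) (Metric.ball_mem_nhds s one_pos)
    (Eventually.of_forall fun x => (integrableOn_rpow_G hα1 hr hc x).aestronglyMeasurable)
    (integrableOn_rpow_G hα1 hr hc s)
    ?_ ?_ ?_ ?_
  · exact key.2
  · apply AEStronglyMeasurable.mul _ (integrableOn_rpow_G hα1 hr hc s).aestronglyMeasurable
    exact ((continuous_const.mul Complex.continuous_ofReal).aestronglyMeasurable)
  · filter_upwards [ae_restrict_mem measurableSet_Ioi] with t ht x _
    simp only [norm_mul, norm_neg, Complex.norm_I, one_mul, norm_osc, norm_G,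
      Complex.norm_real, Real.norm_eq_abs]
    rw [abs_of_nonneg ht.le, abs_of_nonneg (Real.rpow_nonneg ht.le c)]
    apply le_of_eq
    rw [Real.rpow_add_one (ne_of_gt ht)]
    ring
  · exact (integrableOn_rpow_mul_exp_neg_mul_rpow (by linarith) (by linarith) hr)
  · filter_upwards [ae_restrict_mem measurableSet_Ioi] with t _ x _
    have h1 := ((hasDerivAt_osc_param t x).mul_const (G α ξ t)).const_mul ((t ^ c : ℝ) : ℂ)
    refine h1.congr_deriv ?_
    ring

lemma continuous_integral_param (hα1 : 1 < α) (hr : 0 < ξ.re) {c : ℝ} (hc : -1 < c) :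
    Continuous (fun s : ℝ => ∫ t in Ioi 0, ((t ^ c : ℝ) : ℂ) * (osc s t * G α ξ t)) :=
  continuous_iff_continuousAt.mpr fun s => (hasDerivAt_param hα1 hr hc s).continuousAt

/-- Riemann-Lebesgue. -/
lemma tendsto_K_atTop (hα1 : 1 < α) (hα2 : α < 2) (hr : 0 < ξ.re) :
    Tendsto (fun s : ℝ => ∫ t in Ioi 0, ((t ^ (α-2) : ℝ) : ℂ) * (osc s t * G α ξ t))
      atTop (𝓝 0) := by
  set F₀ : ℝ → ℂ := (Ioi (0:ℝ)).indicator (fun t => ((t ^ (α-2) : ℝ) : ℂ) * G α ξ t) with hF₀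
  have h1 := Real.tendsto_integral_exp_smul_cocompact F₀
  have h2 : Tendsto (fun s : ℝ => s / (2*Real.pi)) atTop (cocompact ℝ) := by
    have h3 : Tendsto (fun s : ℝ => s / (2*Real.pi)) atTop atTop :=
      tendsto_id.atTop_div_const (by positivity)
    rw [cocompact_eq_atBot_atTop]
    exact h3.mono_right le_sup_right
  have h4 := h1.comp h2
  apply h4.congr
  intro s
  rw [Function.comp_apply]
  rw [show (∫ t in Ioi 0, ((t ^ (α-2) : ℝ) : ℂ) * (osc s t * G α ξ t))
      = ∫ t, (Ioi (0:ℝ)).indicator (fun t => ((t ^ (α-2) : ℝ) : ℂ) * (osc s t * G α ξ t)) t from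
    (integral_indicator measurableSet_Ioi).symm]
  congr 1
  funext v
  by_cases hv : v ∈ Ioi (0:ℝ)
  · rw [indicator_of_mem hv, hF₀, indicator_of_mem hv, Circle.smul_def,
      Real.fourierChar_apply]
    have harg : ((2 * Real.pi * -(v * (s / (2*Real.pi))) : ℝ) : ℂ) * Complex.I
        = -Complex.I * v * s := by
      have : (2 * Real.pi * -(v * (s / (2*Real.pi))) : ℝ) = -(v * s) := by
        field_simp
      rw [this]
      push_cast
      ring
    rw [harg, smul_eq_mul]
    simp only [osc]
    ring
  · rw [indicator_of_notMem hv, hF₀, indicator_of_notMem hv, smul_zero]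

/-- Derivative of `Hd`. -/
def Hd' (α : ℝ) (ξ : ℂ) (t : ℝ) : ℂ :=
  ((((α-1)*((α-2) * t ^ (α-3)) : ℝ) : ℂ)
      - (α : ℂ) * ξ * (((2*α-2) * t ^ (2*α-3) : ℝ) : ℂ)) * G α ξ t
  + ((((α-1) * t ^ (α-2) : ℝ) : ℂ) - (α : ℂ) * ξ * ((t ^ (2*α-2) : ℝ) : ℂ))
      * (-((α * t ^ (α-1) : ℝ) : ℂ) * ξ * G α ξ t)

lemma hasDerivAt_Hd {t : ℝ} (ht : 0 < t) : HasDerivAt (Hd α ξ) (Hd' α ξ t) t := by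
  have d1 : HasDerivAt (fun t : ℝ => (((α-1) * t ^ (α-2) : ℝ) : ℂ))
      ((((α-1)*((α-2) * t ^ (α-2-1)) : ℝ) : ℂ)) t :=
    ((Real.hasDerivAt_rpow_const (Or.inl ht.ne')).const_mul (α-1)).ofReal_comp
  have d2 : HasDerivAt (fun t : ℝ => ((t ^ (2*α-2) : ℝ) : ℂ))
      (((2*α-2) * t ^ (2*α-2-1) : ℝ) : ℂ) t :=
    (Real.hasDerivAt_rpow_const (Or.inl ht.ne')).ofReal_comp
  have d3 := (d1.sub (d2.const_mul ((α:ℂ) * ξ))).mul (hasDerivAt_G (α := α) (ξ := ξ) ht)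
  refine d3.congr_deriv ?_
  simp only [Hd', Pi.sub_apply]
  rw [show α - 3 = α - 2 - 1 by ring, show 2*α - 3 = 2*α - 2 - 1 by ring]
  try push_cast
  try ring

lemma tendsto_Hd (hα1 : 1 < α) (hr : 0 < ξ.re) : Tendsto (Hd α ξ) atTop (𝓝 0) := by
  have h1 := (tendsto_rpow_G (ξ := ξ) hα1 hr (α-2)).const_mul (((α:ℂ)-1))
  have h2 := (tendsto_rpow_G (ξ := ξ) hα1 hr (2*α-2)).const_mul ((α:ℂ)*ξ)
  have h3 := h1.sub h2
  rw [mul_zero, mul_zero, sub_zero] at h3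
  apply h3.congr
  intro t
  simp only [Hd]
  push_cast
  ring

lemma contOn_ofReal_rpow (c : ℝ) :
    ContinuousOn (fun t : ℝ => ((t ^ c : ℝ) : ℂ)) (Ioi 0) :=
  Complex.continuous_ofReal.comp_continuousOn (continuousOn_rpow c)

lemma continuousOn_Hd (hα : 0 < α) : ContinuousOn (Hd α ξ) (Ioi 0) := by
  apply ContinuousOn.mul _ (continuousOn_G hα).continuousOn
  apply ContinuousOn.sub
  · exact Complex.continuous_ofReal.comp_continuousOn
      (continuousOn_const.mul (continuousOn_rpow (α-2)))
  · exact continuousOn_const.mul (contOn_ofReal_rpow (2*α-2))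

lemma continuousOn_Hd' (hα : 0 < α) : ContinuousOn (Hd' α ξ) (Ioi 0) := by
  apply ContinuousOn.add
  · apply ContinuousOn.mul _ (continuousOn_G hα).continuousOn
    apply ContinuousOn.sub
    · exact Complex.continuous_ofReal.comp_continuousOn
        (continuousOn_const.mul (continuousOn_const.mul (continuousOn_rpow (α-3))))
    · exact continuousOn_const.mul (Complex.continuous_ofReal.comp_continuousOn
        (continuousOn_const.mul (continuousOn_rpow (2*α-3))))
  · apply ContinuousOn.mul
    · apply ContinuousOn.sub
      · exact Complex.continuous_ofReal.comp_continuousOn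
          (continuousOn_const.mul (continuousOn_rpow (α-2)))
      · exact continuousOn_const.mul (contOn_ofReal_rpow (2*α-2))
    · apply ContinuousOn.mul _ (continuousOn_G hα).continuousOn
      apply ContinuousOn.mul _ continuousOn_const
      exact (Complex.continuous_ofReal.comp_continuousOn
        (continuousOn_const.mul (continuousOn_rpow (α-1)))).neg

lemma norm_G_le_one (hr : 0 < ξ.re) {t : ℝ} (ht : 0 ≤ t) : ‖G α ξ t‖ ≤ 1 := by
  rw [norm_G, ← Real.exp_zero]
  apply Real.exp_le_exp.mpr
  rw [neg_mul]
  exact neg_nonpos.mpr (mul_nonneg hr.le (Real.rpow_nonneg ht α))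

lemma norm_Hd_le (hα1 : 1 < α) (hr : 0 < ξ.re) {t : ℝ} (ht : 0 < t) :
    ‖Hd α ξ t‖ ≤ (α-1) * t^(α-2) + α*‖ξ‖ * t^(2*α-2) := by
  simp only [Hd]
  rw [norm_mul]
  have h1 : ‖(((α-1) * t ^ (α-2) : ℝ) : ℂ) - (α : ℂ) * ξ * ((t ^ (2*α-2) : ℝ) : ℂ)‖
      ≤ (α-1) * t^(α-2) + α*‖ξ‖ * t^(2*α-2) := by
    refine (norm_sub_le _ _).trans (le_of_eq ?_)
    rw [Complex.norm_real, Real.norm_eq_abs,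
      abs_of_nonneg (mul_nonneg (by linarith) (Real.rpow_nonneg ht.le _)),
      norm_mul, norm_mul, Complex.norm_real, Complex.norm_real, Real.norm_eq_abs,
      Real.norm_eq_abs, abs_of_nonneg (by linarith : (0:ℝ) ≤ α),
      abs_of_nonneg (Real.rpow_nonneg ht.le _)]
    try ring
  have e1 : 0 ≤ (α-1) * t^(α-2) := mul_nonneg (by linarith) (Real.rpow_nonneg ht.le _)
  have e2 : 0 ≤ α*‖ξ‖ * t^(2*α-2) :=
    mul_nonneg (mul_nonneg (by linarith) (norm_nonneg _)) (Real.rpow_nonneg ht.le _)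
  calc _ ≤ ((α-1) * t^(α-2) + α*‖ξ‖ * t^(2*α-2)) * 1 :=
        mul_le_mul h1 (norm_G_le_one hr ht.le) (norm_nonneg _) (by linarith)
    _ = _ := mul_one _

lemma norm_pre_le (hα1 : 1 < α) {t : ℝ} (ht : 0 < t) :
    ‖(((α-1) * t ^ (α-2) : ℝ) : ℂ) - (α : ℂ) * ξ * ((t ^ (2*α-2) : ℝ) : ℂ)‖
      ≤ (α-1) * t^(α-2) + α*‖ξ‖ * t^(2*α-2) := by
  refine (norm_sub_le _ _).trans (le_of_eq ?_)
  rw [Complex.norm_real, Real.norm_eq_abs,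
    abs_of_nonneg (mul_nonneg (by linarith) (Real.rpow_nonneg ht.le _)),
    norm_mul, norm_mul, Complex.norm_real, Complex.norm_real, Real.norm_eq_abs,
    Real.norm_eq_abs, abs_of_nonneg (by linarith : (0:ℝ) ≤ α),
    abs_of_nonneg (Real.rpow_nonneg ht.le _)]
  try ring

lemma norm_Hd'_le (hα1 : 1 < α) (hα2 : α < 2) (hr : 0 < ξ.re) {t : ℝ} (ht : 0 < t) :
    ‖Hd' α ξ t‖ ≤ (α-1)*(2-α) * t^(α-3)
      + (α*‖ξ‖*(2*α-2) + (α-1)*(α*‖ξ‖)) * (t^(2*α-3) * Real.exp (-ξ.re * t^α))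
      + (α*‖ξ‖)^2 * (t^(3*α-3) * Real.exp (-ξ.re * t^α)) := by
  have hG : ‖G α ξ t‖ = Real.exp (-ξ.re * t ^ α) := norm_G α ξ t
  have he0 : (0:ℝ) ≤ Real.exp (-ξ.re * t ^ α) := Real.exp_nonneg _
  have he1 : Real.exp (-ξ.re * t ^ α) ≤ 1 := by
    rw [← Real.exp_zero]
    apply Real.exp_le_exp.mpr
    rw [neg_mul]
    exact neg_nonpos.mpr (mul_nonneg hr.le (Real.rpow_nonneg ht.le α))
  have hr1 : t^(α-2) * t^(α-1) = t^(2*α-3) := by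
    rw [← Real.rpow_add ht]; congr 1; ring
  have hr2 : t^(2*α-2) * t^(α-1) = t^(3*α-3) := by
    rw [← Real.rpow_add ht]; congr 1; ring
  have hA : ‖((((α-1)*((α-2) * t ^ (α-3)) : ℝ) : ℂ)
        - (α : ℂ) * ξ * (((2*α-2) * t ^ (2*α-3) : ℝ) : ℂ))‖
      ≤ (α-1)*(2-α) * t^(α-3) + α*‖ξ‖*((2*α-2) * t^(2*α-3)) := by
    refine (norm_sub_le _ _).trans ?_
    have h1 : ‖((((α-1)*((α-2) * t ^ (α-3)) : ℝ)) : ℂ)‖ = (α-1)*(2-α) * t^(α-3) := by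
      rw [Complex.norm_real, Real.norm_eq_abs, abs_mul, abs_mul,
        abs_of_nonneg (by linarith : (0:ℝ) ≤ α-1), abs_of_neg (by linarith : α-2 < 0),
        abs_of_nonneg (Real.rpow_nonneg ht.le _)]
      ring
    have h2 : ‖(α : ℂ) * ξ * (((2*α-2) * t ^ (2*α-3) : ℝ) : ℂ)‖
        = α*‖ξ‖*((2*α-2) * t^(2*α-3)) := by
      rw [norm_mul, norm_mul, Complex.norm_real, Complex.norm_real, Real.norm_eq_abs,
        Real.norm_eq_abs, abs_of_nonneg (by linarith : (0:ℝ) ≤ α),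
        abs_of_nonneg (mul_nonneg (by linarith) (Real.rpow_nonneg ht.le _))]
    rw [h1, h2]
  have hC : ‖-((α * t ^ (α-1) : ℝ) : ℂ) * ξ * G α ξ t‖
      = (α * t^(α-1) * ‖ξ‖) * Real.exp (-ξ.re * t ^ α) := by
    rw [norm_mul, norm_mul, norm_neg, Complex.norm_real, Real.norm_eq_abs,
      abs_of_nonneg (mul_nonneg (by linarith : (0:ℝ) ≤ α) (Real.rpow_nonneg ht.le _)), hG]
  have hcnon : (0:ℝ) ≤ (α * t^(α-1) * ‖ξ‖) * Real.exp (-ξ.re * t ^ α) := by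
    apply mul_nonneg _ he0
    exact mul_nonneg (mul_nonneg (by linarith) (Real.rpow_nonneg ht.le _)) (norm_nonneg _)
  have hB := norm_pre_le (ξ := ξ) hα1 ht
  calc ‖Hd' α ξ t‖
      ≤ ‖((((α-1)*((α-2) * t ^ (α-3)) : ℝ) : ℂ)
            - (α : ℂ) * ξ * (((2*α-2) * t ^ (2*α-3) : ℝ) : ℂ)) * G α ξ t‖
        + ‖((((α-1) * t ^ (α-2) : ℝ) : ℂ) - (α : ℂ) * ξ * ((t ^ (2*α-2) : ℝ) : ℂ))
            * (-((α * t ^ (α-1) : ℝ) : ℂ) * ξ * G α ξ t)‖ := norm_add_le _ _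
    _ ≤ ((α-1)*(2-α) * t^(α-3) + α*‖ξ‖*((2*α-2) * t^(2*α-3))) * Real.exp (-ξ.re * t ^ α)
        + ((α-1) * t^(α-2) + α*‖ξ‖ * t^(2*α-2))
            * ((α * t^(α-1) * ‖ξ‖) * Real.exp (-ξ.re * t ^ α)) := by
      rw [norm_mul, norm_mul, hG, hC]
      exact add_le_add (mul_le_mul_of_nonneg_right hA he0)
        (mul_le_mul_of_nonneg_right hB hcnon)
    _ ≤ (α-1)*(2-α) * t^(α-3)
        + (α*‖ξ‖*(2*α-2) + (α-1)*(α*‖ξ‖)) * (t^(2*α-3) * Real.exp (-ξ.re * t^α))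
        + (α*‖ξ‖)^2 * (t^(3*α-3) * Real.exp (-ξ.re * t^α)) := by
      rw [← hr1, ← hr2]
      have h3 : ((α-1)*(2-α) * t^(α-3)) * Real.exp (-ξ.re * t ^ α)
          ≤ (α-1)*(2-α) * t^(α-3) := by
        apply mul_le_of_le_one_right _ he1
        exact mul_nonneg (mul_nonneg (by linarith) (by linarith)) (Real.rpow_nonneg ht.le _)
      nlinarith [Real.rpow_nonneg ht.le (α-3), Real.rpow_nonneg ht.le (α-2),
        Real.rpow_nonneg ht.le (α-1), Real.rpow_nonneg ht.le (2*α-2),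
        Real.rpow_nonneg ht.le (2*α-3), norm_nonneg ξ, he0]

/-- Auxiliary constant: `∫_0^∞ t^c e^{-r t^α} dt`. -/
def DD (α r c : ℝ) : ℝ := ∫ t in Ioi (0:ℝ), t^c * Real.exp (-r * t^α)

lemma integrableOn_osc_Hd' (hα1 : 1 < α) (hα2 : α < 2) (hr : 0 < ξ.re) (s : ℝ)
    {ε : ℝ} (hε : 0 < ε) :
    IntegrableOn (fun t => osc s t * Hd' α ξ t) (Ioi ε) volume := by
  have hmeas : AEStronglyMeasurable (fun t => osc s t * Hd' α ξ t)
      (volume.restrict (Ioi ε)) := by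
    apply ContinuousOn.aestronglyMeasurable _ measurableSet_Ioi
    apply ContinuousOn.mul
    · exact (Complex.continuous_exp.comp
        ((continuous_const.mul Complex.continuous_ofReal).mul continuous_const)).continuousOn
    · exact (continuousOn_Hd' (by linarith)).mono (Ioi_subset_Ioi hε.le)
  have g1 : IntegrableOn (fun t : ℝ => t^(α-3)) (Ioi ε) volume :=
    integrableOn_Ioi_rpow_of_lt (by linarith) hε
  have g2 : IntegrableOn (fun t : ℝ => t^(2*α-3) * Real.exp (-ξ.re * t^α)) (Ioi ε) volume :=
    (integrableOn_rpow_mul_exp_neg_mul_rpow (by linarith) (by linarith) hr).mono_set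
      (Ioi_subset_Ioi hε.le)
  have g3 : IntegrableOn (fun t : ℝ => t^(3*α-3) * Real.exp (-ξ.re * t^α)) (Ioi ε) volume :=
    (integrableOn_rpow_mul_exp_neg_mul_rpow (by linarith) (by linarith) hr).mono_set
      (Ioi_subset_Ioi hε.le)
  have gA : IntegrableOn (fun t : ℝ => (α-1)*(2-α) * t^(α-3)) (Ioi ε) volume :=
    g1.const_mul _
  have gB : IntegrableOn (fun t : ℝ =>
      (α*‖ξ‖*(2*α-2) + (α-1)*(α*‖ξ‖)) * (t^(2*α-3) * Real.exp (-ξ.re * t^α)))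
      (Ioi ε) volume := g2.const_mul _
  have gC : IntegrableOn (fun t : ℝ =>
      (α*‖ξ‖)^2 * (t^(3*α-3) * Real.exp (-ξ.re * t^α))) (Ioi ε) volume := g3.const_mul _
  have gAB : IntegrableOn (fun t : ℝ => (α-1)*(2-α) * t^(α-3)
      + (α*‖ξ‖*(2*α-2) + (α-1)*(α*‖ξ‖)) * (t^(2*α-3) * Real.exp (-ξ.re * t^α)))
      (Ioi ε) volume := gA.add gB
  have gABC : IntegrableOn (fun t : ℝ => (α-1)*(2-α) * t^(α-3)
      + (α*‖ξ‖*(2*α-2) + (α-1)*(α*‖ξ‖)) * (t^(2*α-3) * Real.exp (-ξ.re * t^α))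
      + (α*‖ξ‖)^2 * (t^(3*α-3) * Real.exp (-ξ.re * t^α))) (Ioi ε) volume := gAB.add gC
  refine Integrable.mono' gABC hmeas ?_
  filter_upwards [ae_restrict_mem measurableSet_Ioi] with t ht
  have ht0 : 0 < t := hε.trans ht
  rw [norm_mul, norm_osc, one_mul]
  exact norm_Hd'_le hα1 hα2 hr ht0

/-- Third integration by parts, on `(ε, ∞)`. -/
lemma keyC (hα1 : 1 < α) (hα2 : α < 2) (hr : 0 < ξ.re) {s ε : ℝ} (hs : 0 < s) (hε : 0 < ε) :
    ∫ t in Ioi ε, osc s t * Hd α ξ t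
      = osc s ε * Hd α ξ ε / (Complex.I * s)
        + (1/(Complex.I * s)) * ∫ t in Ioi ε, osc s t * Hd' α ξ t :=
  ibp ε hs (fun t ht => hasDerivAt_Hd (hε.trans ht))
    (((continuousOn_Hd (ξ := ξ) (by linarith)).continuousAt (Ioi_mem_nhds hε)).continuousWithinAt)
    (tendsto_Hd hα1 hr) (integrableOn_osc_Hd hα1 hα2 hr s ε hε.le)
    (integrableOn_osc_Hd' hα1 hα2 hr s hε)

lemma intHd'_bound (hα1 : 1 < α) (hα2 : α < 2) (hr : 0 < ξ.re) (s : ℝ) {ε : ℝ} (hε : 0 < ε) :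
    ‖∫ t in Ioi ε, osc s t * Hd' α ξ t‖
      ≤ (α-1) * ε^(α-2) + ((α*‖ξ‖*(2*α-2) + (α-1)*(α*‖ξ‖)) * DD α ξ.re (2*α-3)
          + (α*‖ξ‖)^2 * DD α ξ.re (3*α-3)) := by
  have g1 : IntegrableOn (fun t : ℝ => t^(α-3)) (Ioi ε) volume :=
    integrableOn_Ioi_rpow_of_lt (by linarith) hε
  have g2' : IntegrableOn (fun t : ℝ => t^(2*α-3) * Real.exp (-ξ.re * t^α)) (Ioi 0) volume :=
    integrableOn_rpow_mul_exp_neg_mul_rpow (by linarith) (by linarith) hr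
  have g3' : IntegrableOn (fun t : ℝ => t^(3*α-3) * Real.exp (-ξ.re * t^α)) (Ioi 0) volume :=
    integrableOn_rpow_mul_exp_neg_mul_rpow (by linarith) (by linarith) hr
  have g2 := g2'.mono_set (Ioi_subset_Ioi hε.le)
  have g3 := g3'.mono_set (Ioi_subset_Ioi hε.le)
  have gA : IntegrableOn (fun t : ℝ => (α-1)*(2-α) * t^(α-3)) (Ioi ε) volume :=
    g1.const_mul _
  have gB : IntegrableOn (fun t : ℝ =>
      (α*‖ξ‖*(2*α-2) + (α-1)*(α*‖ξ‖)) * (t^(2*α-3) * Real.exp (-ξ.re * t^α)))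
      (Ioi ε) volume := g2.const_mul _
  have gC : IntegrableOn (fun t : ℝ =>
      (α*‖ξ‖)^2 * (t^(3*α-3) * Real.exp (-ξ.re * t^α))) (Ioi ε) volume := g3.const_mul _
  have gAB : IntegrableOn (fun t : ℝ => (α-1)*(2-α) * t^(α-3)
      + (α*‖ξ‖*(2*α-2) + (α-1)*(α*‖ξ‖)) * (t^(2*α-3) * Real.exp (-ξ.re * t^α)))
      (Ioi ε) volume := gA.add gB
  have gABC : IntegrableOn (fun t : ℝ => (α-1)*(2-α) * t^(α-3)
      + (α*‖ξ‖*(2*α-2) + (α-1)*(α*‖ξ‖)) * (t^(2*α-3) * Real.exp (-ξ.re * t^α))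
      + (α*‖ξ‖)^2 * (t^(3*α-3) * Real.exp (-ξ.re * t^α))) (Ioi ε) volume := gAB.add gC
  have hbound : ‖∫ t in Ioi ε, osc s t * Hd' α ξ t‖
      ≤ ∫ t in Ioi ε, ((α-1)*(2-α) * t^(α-3)
        + (α*‖ξ‖*(2*α-2) + (α-1)*(α*‖ξ‖)) * (t^(2*α-3) * Real.exp (-ξ.re * t^α))
        + (α*‖ξ‖)^2 * (t^(3*α-3) * Real.exp (-ξ.re * t^α))) := by
    apply norm_integral_le_of_norm_le gABC
    filter_upwards [ae_restrict_mem measurableSet_Ioi] with t ht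
    rw [norm_mul, norm_osc, one_mul]
    exact norm_Hd'_le hα1 hα2 hr (hε.trans ht)
  refine hbound.trans ?_
  rw [integral_add gAB gC, integral_add gA gB,
    integral_const_mul, integral_const_mul, integral_const_mul]
  have i1 : ∫ t in Ioi ε, t^(α-3) = -ε^(α-2)/(α-2) := by
    rw [integral_Ioi_rpow_of_lt (by linarith) hε, show α-3+1 = α-2 by ring]
  have i1' : (α-1)*(2-α) * ∫ t in Ioi ε, t^(α-3) = (α-1) * ε^(α-2) := by
    rw [i1]
    have : α - 2 ≠ 0 := by linarith
    field_simp
    ring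
  rw [i1']
  have mono2 : ∫ t in Ioi ε, t^(2*α-3) * Real.exp (-ξ.re * t^α) ≤ DD α ξ.re (2*α-3) := by
    apply setIntegral_mono_set g2' _ (HasSubset.Subset.eventuallyLE (Ioi_subset_Ioi hε.le))
    filter_upwards [ae_restrict_mem measurableSet_Ioi] with t ht
    exact mul_nonneg (Real.rpow_nonneg (le_of_lt ht) _) (Real.exp_nonneg _)
  have mono3 : ∫ t in Ioi ε, t^(3*α-3) * Real.exp (-ξ.re * t^α) ≤ DD α ξ.re (3*α-3) := by
    apply setIntegral_mono_set g3' _ (HasSubset.Subset.eventuallyLE (Ioi_subset_Ioi hε.le))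
    filter_upwards [ae_restrict_mem measurableSet_Ioi] with t ht
    exact mul_nonneg (Real.rpow_nonneg (le_of_lt ht) _) (Real.exp_nonneg _)
  have c2 : (0:ℝ) ≤ α*‖ξ‖*(2*α-2) + (α-1)*(α*‖ξ‖) := by
    have h := norm_nonneg ξ
    have hα0 : (0:ℝ) ≤ α := by linarith
    have h1 := mul_nonneg (mul_nonneg hα0 h) (by linarith : (0:ℝ) ≤ 2*α-2)
    have h2 := mul_nonneg (by linarith : (0:ℝ) ≤ α-1) (mul_nonneg hα0 h)
    linarith
  have c3 : (0:ℝ) ≤ (α*‖ξ‖)^2 := sq_nonneg _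
  have := add_le_add (mul_le_mul_of_nonneg_left mono2 c2) (mul_le_mul_of_nonneg_left mono3 c3)
  linarith

def CB0 (α : ℝ) (ξ : ℂ) : ℝ := (1 + α*‖ξ‖) + (((α-1) + α*‖ξ‖) + (α-1))

def CD0 (α : ℝ) (ξ : ℂ) : ℝ :=
  (α*‖ξ‖*(2*α-2) + (α-1)*(α*‖ξ‖)) * DD α ξ.re (2*α-3) + (α*‖ξ‖)^2 * DD α ξ.re (3*α-3)

lemma F_bound (hα1 : 1 < α) (hα2 : α < 2) (hr : 0 < ξ.re) {s : ℝ} (hs : 1 ≤ s) :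
    ‖∫ t in Ioi 0, osc s t * Hd α ξ t‖
      ≤ CB0 α ξ * (s⁻¹)^(α-1) + CD0 α ξ * s⁻¹ := by
  have hs0 : 0 < s := by linarith
  have hε0 : 0 < s⁻¹ := inv_pos.mpr hs0
  have hε1 : s⁻¹ ≤ 1 := by rw [← one_div, div_le_one hs0]; exact hs
  have hIs : ‖Complex.I * (s:ℂ)‖ = s := by
    rw [norm_mul, Complex.norm_I, one_mul, Complex.norm_real, Real.norm_eq_abs, abs_of_pos hs0]
  have hξ0 : (0:ℝ) ≤ ‖ξ‖ := norm_nonneg ξ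
  -- split the integral
  have hsplit : ∫ t in Ioi 0, osc s t * Hd α ξ t
      = (∫ t in Ioc 0 s⁻¹, osc s t * Hd α ξ t) + ∫ t in Ioi s⁻¹, osc s t * Hd α ξ t := by
    rw [← setIntegral_union (Ioc_disjoint_Ioi le_rfl) measurableSet_Ioi
        ((integrableOn_osc_Hd hα1 hα2 hr s 0 le_rfl).mono_set Ioc_subset_Ioi_self)
        (integrableOn_osc_Hd hα1 hα2 hr s s⁻¹ hε0.le),
      Ioc_union_Ioi_eq_Ioi hε0.le]
  -- part 1
  have int1 : IntegrableOn (fun t : ℝ => t^(α-2)) (Ioc 0 s⁻¹) volume :=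
    (intervalIntegrable_iff_integrableOn_Ioc_of_le hε0.le).mp
      (intervalIntegral.intervalIntegrable_rpow' (by linarith))
  have int2 : IntegrableOn (fun t : ℝ => t^(2*α-2)) (Ioc 0 s⁻¹) volume :=
    (intervalIntegrable_iff_integrableOn_Ioc_of_le hε0.le).mp
      (intervalIntegral.intervalIntegrable_rpow' (by linarith))
  have int1' : IntegrableOn (fun t : ℝ => (α-1) * t^(α-2)) (Ioc 0 s⁻¹) volume :=
    int1.const_mul _
  have int2' : IntegrableOn (fun t : ℝ => α*‖ξ‖ * t^(2*α-2)) (Ioc 0 s⁻¹) volume :=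
    int2.const_mul _
  have intS : IntegrableOn (fun t : ℝ => (α-1) * t^(α-2) + α*‖ξ‖ * t^(2*α-2))
      (Ioc 0 s⁻¹) volume := int1'.add int2'
  have hP1 : ‖∫ t in Ioc 0 s⁻¹, osc s t * Hd α ξ t‖ ≤ (1 + α*‖ξ‖) * (s⁻¹)^(α-1) := by
    have hb := norm_integral_le_of_norm_le
      (f := fun t : ℝ => osc s t * Hd α ξ t) intS ?_
    · refine hb.trans ?_
      rw [integral_add int1' int2', integral_const_mul, integral_const_mul]
      have iA : ∫ t in Ioc 0 s⁻¹, t^(α-2) = (s⁻¹)^(α-1)/(α-1) := by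
        rw [← intervalIntegral.integral_of_le hε0.le, integral_rpow (Or.inl (by linarith)),
          show α-2+1 = α-1 by ring, Real.zero_rpow (by intro h; linarith), sub_zero]
      have iB : ∫ t in Ioc 0 s⁻¹, t^(2*α-2) = (s⁻¹)^(2*α-1)/(2*α-1) := by
        rw [← intervalIntegral.integral_of_le hε0.le, integral_rpow (Or.inl (by linarith)),
          show 2*α-2+1 = 2*α-1 by ring, Real.zero_rpow (by intro h; linarith), sub_zero]
      rw [iA, iB]
      have e1 : (α-1) * ((s⁻¹)^(α-1)/(α-1)) = (s⁻¹)^(α-1) := by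
        rw [mul_comm, div_mul_cancel₀ _ (show α-(1:ℝ) ≠ 0 by intro h; linarith)]
      have e2 : (s⁻¹)^(2*α-1)/(2*α-1) ≤ (s⁻¹)^(α-1) := by
        refine (div_le_self (Real.rpow_nonneg hε0.le _) (by linarith)).trans ?_
        exact Real.rpow_le_rpow_of_exponent_ge hε0 hε1 (by linarith)
      have e3 := mul_le_mul_of_nonneg_left e2 (mul_nonneg (by linarith : (0:ℝ) ≤ α) hξ0)
      rw [e1]
      nlinarith [Real.rpow_nonneg hε0.le (α-1)]
    · filter_upwards [ae_restrict_mem measurableSet_Ioc] with t ht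
      rw [norm_mul, norm_osc, one_mul]
      exact norm_Hd_le hα1 hr ht.1
  -- part 2
  have hpow : (s⁻¹)^(α-1) = (s⁻¹)^(α-2) * s⁻¹ := by
    rw [show α-1 = α-2+1 by ring, Real.rpow_add_one (ne_of_gt hε0)]
  have hHdε : ‖Hd α ξ s⁻¹‖ ≤ ((α-1) + α*‖ξ‖) * (s⁻¹)^(α-2) := by
    refine (norm_Hd_le hα1 hr hε0).trans ?_
    have e2 : (s⁻¹)^(2*α-2) ≤ (s⁻¹)^(α-2) :=
      Real.rpow_le_rpow_of_exponent_ge hε0 hε1 (by linarith)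
    have e3 := mul_le_mul_of_nonneg_left e2 (mul_nonneg (by linarith : (0:ℝ) ≤ α) hξ0)
    nlinarith
  have hP2 : ‖∫ t in Ioi s⁻¹, osc s t * Hd α ξ t‖
      ≤ (((α-1) + α*‖ξ‖) + (α-1)) * (s⁻¹)^(α-1) + CD0 α ξ * s⁻¹ := by
    rw [keyC hα1 hα2 hr hs0 hε0]
    refine (norm_add_le _ _).trans ?_
    have e1 : ‖osc s s⁻¹ * Hd α ξ s⁻¹ / (Complex.I * s)‖ = ‖Hd α ξ s⁻¹‖ / s := by
      rw [norm_div, norm_mul, norm_osc, one_mul, hIs]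
    have e2 : ‖(1/(Complex.I * (s:ℂ))) * ∫ t in Ioi s⁻¹, osc s t * Hd' α ξ t‖
        = ‖∫ t in Ioi s⁻¹, osc s t * Hd' α ξ t‖ / s := by
      rw [norm_mul, norm_div, norm_one, hIs, one_div, ← div_eq_inv_mul]
    rw [e1, e2]
    have h1 : ‖Hd α ξ s⁻¹‖ / s ≤ (((α-1) + α*‖ξ‖) * (s⁻¹)^(α-2)) / s := by
      gcongr
    have h2 : ‖∫ t in Ioi s⁻¹, osc s t * Hd' α ξ t‖ / s
        ≤ ((α-1) * (s⁻¹)^(α-2) + ((α*‖ξ‖*(2*α-2) + (α-1)*(α*‖ξ‖)) * DD α ξ.re (2*α-3)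
            + (α*‖ξ‖)^2 * DD α ξ.re (3*α-3))) / s := by
      gcongr
      exact intHd'_bound hα1 hα2 hr s hε0
    refine (add_le_add h1 h2).trans (le_of_eq ?_)
    rw [CD0, div_eq_mul_inv, div_eq_mul_inv, hpow]
    ring
  rw [hsplit, CB0]
  refine (norm_add_le _ _).trans ?_
  have expand : ((1 + α*‖ξ‖) + (((α-1) + α*‖ξ‖) + (α-1))) * (s⁻¹)^(α-1)
      = (1 + α*‖ξ‖) * (s⁻¹)^(α-1) + (((α-1) + α*‖ξ‖) + (α-1)) * (s⁻¹)^(α-1) := by ring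
  rw [expand]
  linarith

lemma J_bound (hα1 : 1 < α) (hα2 : α < 2) (hr : 0 < ξ.re) {s : ℝ} (hs : 1 ≤ s) :
    ‖∫ t in Ioi 0, ((t ^ (α-1) : ℝ) : ℂ) * (osc s t * G α ξ t)‖
      ≤ CB0 α ξ * s^(-α) + CD0 α ξ * s^(-(2:ℝ)) := by
  have hs0 : 0 < s := by linarith
  have hε0 : 0 < s⁻¹ := inv_pos.mpr hs0
  have hIs : ‖Complex.I * (s:ℂ)‖ = s := by
    rw [norm_mul, Complex.norm_I, one_mul, Complex.norm_real, Real.norm_eq_abs, abs_of_pos hs0]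
  rw [keyB hα1 hα2 hr hs0]
  rw [norm_mul, norm_div, norm_one, hIs, one_div]
  have hF := F_bound hα1 hα2 hr hs
  calc s⁻¹ * ‖∫ t in Ioi 0, osc s t * Hd α ξ t‖
      ≤ s⁻¹ * (CB0 α ξ * (s⁻¹)^(α-1) + CD0 α ξ * s⁻¹) :=
        mul_le_mul_of_nonneg_left hF hε0.le
    _ = CB0 α ξ * s^(-α) + CD0 α ξ * s^(-(2:ℝ)) := by
        have e1 : (s⁻¹)^(α-1) * s⁻¹ = s^(-α) := by
          rw [← Real.rpow_add_one (ne_of_gt hε0), show α-1+1 = α by ring,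
            Real.inv_rpow hs0.le, ← Real.rpow_neg hs0.le]
        have e2 : s⁻¹ * s⁻¹ = s^(-(2:ℝ)) := by
          rw [Real.rpow_neg hs0.le, show (2:ℝ) = ((2:ℕ):ℝ) by norm_num,
            Real.rpow_natCast, pow_two, mul_inv]
        rw [← e1, ← e2]
        ring

end StableAux

open StableAux

/-- **Theorem 5.3 (integral form).** For the stable density `f` of `S_α(σ, β, 0)` with
`α ∈ (1,2)`, `ξ = σ^α (1 - iβ tan(πα/2))`, the tail partial first moment satisfies
`∫_{s_q}^∞ s f(s) ds = (α/π) Re[ξ ∫₀^∞ t^{α-2} exp(-i s_q t - t^α ξ) dt]`; dividing by `1 - q`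
gives the Tail Conditional Expectation at prudence level `q`. -/
theorem stable_tce_integral_form
    (α β σ : ℝ) (hα : α ∈ Set.Ioo (1 : ℝ) 2) (hβ : β ∈ Set.Icc (-1 : ℝ) 1) (hσ : 0 < σ)
    (ξ : ℂ) (hξ : ξ = ((σ ^ α : ℝ) : ℂ) * (1 - Complex.I * β * Real.tan (Real.pi * α / 2)))
    (f : ℝ → ℝ)
    (hf : ∀ s : ℝ, f s = (1 / Real.pi) *
      (∫ t in Set.Ioi (0 : ℝ), Complex.exp (-Complex.I * t * s -
        ((t ^ α : ℝ) : ℂ) * ξ)).re) :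
    ∀ sq : ℝ, 0 < sq →
      (∫ s in Set.Ioi sq, s * f s) =
        (α / Real.pi) * (ξ * ∫ t in Set.Ioi (0 : ℝ),
          ((t ^ (α - 2) : ℝ) : ℂ) *
            Complex.exp (-Complex.I * sq * t - ((t ^ α : ℝ) : ℂ) * ξ)).re ∧
      ∀ q ∈ Set.Ioo (0 : ℝ) 1,
        (1 / (1 - q)) * (∫ s in Set.Ioi sq, s * f s) =
          (α / (Real.pi * (1 - q))) * (ξ * ∫ t in Set.Ioi (0 : ℝ),
            ((t ^ (α - 2) : ℝ) : ℂ) *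
              Complex.exp (-Complex.I * sq * t - ((t ^ α : ℝ) : ℂ) * ξ)).re := by
  obtain ⟨hα1, hα2⟩ := hα
  have hr : 0 < ξ.re := by
    have h1 : ξ.re = σ ^ α := by
      rw [hξ, Complex.re_ofReal_mul]
      have h2 : (Complex.I * (β:ℂ) * ((Real.tan (Real.pi * α / 2) : ℝ) : ℂ)).re = 0 := by
        rw [mul_assoc, ← Complex.ofReal_mul, Complex.mul_re, Complex.I_re, Complex.I_im,
          Complex.ofReal_re, Complex.ofReal_im]
        ring
      rw [Complex.sub_re, Complex.one_re, h2, sub_zero, mul_one]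
    rw [h1]
    exact Real.rpow_pos_of_pos hσ α
  intro sq hsq
  -- notation
  set K : ℝ → ℂ := fun s => ∫ t in Ioi 0, ((t ^ (α-2) : ℝ) : ℂ) * (osc s t * G α ξ t) with hK
  set J : ℝ → ℂ := fun s => ∫ t in Ioi 0, ((t ^ (α-1) : ℝ) : ℂ) * (osc s t * G α ξ t) with hJ
  -- f rewritten
  have hfM : ∀ s : ℝ, f s = (1 / Real.pi) * (∫ t in Ioi 0, osc s t * G α ξ t).re := by
    intro s
    rw [hf s]
    congr 2
    exact setIntegral_congr_fun measurableSet_Ioi fun t _ => E_eq α ξ s t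
  -- the formula for s * f s
  have hsf : ∀ s : ℝ, 0 < s →
      s * f s = (α / Real.pi) * (Complex.I * ξ * J s).re := by
    intro s hs
    have hsne : ((s:ℂ)) ≠ 0 := by exact_mod_cast hs.ne'
    have hsM : (s:ℂ) * ∫ t in Ioi 0, osc s t * G α ξ t
        = -Complex.I + (α:ℂ) * (Complex.I * ξ * J s) := by
      show (s:ℂ) * (∫ t in Ioi 0, osc s t * G α ξ t)
        = -Complex.I + (α:ℂ) * (Complex.I * ξ *
            ∫ t in Ioi (0:ℝ), ((t ^ (α-1) : ℝ) : ℂ) * (osc s t * G α ξ t))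
      rw [keyA hα1 hα2 hr hs]
      generalize (∫ t in Ioi (0:ℝ), ((t ^ (α-1) : ℝ) : ℂ) * (osc s t * G α ξ t)) = w
      field_simp [Complex.I_ne_zero]
      ring_nf
      rw [Complex.I_sq]
      ring
    rw [hfM s]
    have h2 : s * ((1 / Real.pi) * (∫ t in Ioi 0, osc s t * G α ξ t).re)
        = (1 / Real.pi) * (((s:ℂ) * ∫ t in Ioi 0, osc s t * G α ξ t).re) := by
      rw [Complex.re_ofReal_mul]
      ring
    rw [h2, hsM, Complex.add_re, Complex.neg_re, Complex.I_re, Complex.re_ofReal_mul]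
    ring
  -- derivative
  have hΦ : ∀ s : ℝ, 0 < s →
      HasDerivAt (fun s => -((α / Real.pi) * (ξ * K s).re)) (s * f s) s := by
    intro s hs
    have hKd := hasDerivAt_param (ξ := ξ) hα1 hr (c := α - 2) (by linarith) s
    have hKJ : (∫ t in Ioi (0:ℝ), (-Complex.I * (t:ℂ))
          * (((t ^ (α-2) : ℝ) : ℂ) * (osc s t * G α ξ t)))
        = -Complex.I * J s := by
      show _ = -Complex.I * ∫ t in Ioi (0:ℝ), ((t ^ (α-1) : ℝ) : ℂ) * (osc s t * G α ξ t)
      rw [← integral_const_mul (-Complex.I)]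
      apply setIntegral_congr_fun measurableSet_Ioi
      intro t ht
      dsimp only
      have h3 : t ^ (α-1) = t ^ (α-2) * t := by
        rw [show α-1 = α-2+1 by ring, Real.rpow_add_one (ne_of_gt ht)]
      rw [h3]
      push_cast
      ring
    rw [hKJ] at hKd
    have hKc : HasDerivAt (fun s => ξ * K s) (ξ * (-Complex.I * J s)) s := hKd.const_mul ξ
    have hre : HasDerivAt (fun s => (ξ * K s).re) ((ξ * (-Complex.I * J s)).re) s :=
      Complex.reCLM.hasFDerivAt.comp_hasDerivAt s hKc
    have h4 := (hre.const_mul (α / Real.pi)).neg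
    refine h4.congr_deriv ?_
    rw [hsf s hs, show ξ * (-Complex.I * J s) = -(Complex.I * ξ * J s) by ring,
      Complex.neg_re]
    ring
  -- tendsto
  have hΦ0 : Tendsto (fun s => -((α / Real.pi) * (ξ * K s).re)) atTop (𝓝 0) := by
    have h1 := tendsto_K_atTop hα1 hα2 hr (ξ := ξ)
    have h2 : Tendsto (fun s => ξ * K s) atTop (𝓝 (ξ * 0)) := h1.const_mul ξ
    rw [mul_zero] at h2
    have h3 : Tendsto (fun s => (ξ * K s).re) atTop (𝓝 0) := by
      have := (Complex.continuous_re.tendsto 0).comp h2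
      rw [Complex.zero_re] at this
      exact this
    have h4 := (h3.const_mul (α / Real.pi)).neg
    simpa using h4
  -- continuity of s * f s
  have hMc : Continuous (fun s => ∫ t in Ioi 0, osc s t * G α ξ t) := by
    have h1 := continuous_integral_param (ξ := ξ) hα1 hr (c := 0) (by norm_num)
    simpa [Real.rpow_zero] using h1
  have hfc : Continuous f := by
    have h1 : f = fun s => (1 / Real.pi) * (∫ t in Ioi 0, osc s t * G α ξ t).re :=
      funext hfM
    rw [h1]
    exact continuous_const.mul (Complex.continuous_re.comp hMc)
  have hsfc : Continuous (fun s : ℝ => s * f s) := continuous_id.mul hfc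
  -- integrability of s * f s on (sq, ∞)
  have hInt : IntegrableOn (fun s : ℝ => s * f s) (Ioi sq) volume := by
    have hS0 : (0:ℝ) < max sq 1 := lt_of_lt_of_le one_pos (le_max_right _ _)
    rw [← Ioc_union_Ioi_eq_Ioi (le_max_left sq 1), integrableOn_union]
    constructor
    · exact hsfc.integrableOn_Ioc
    · have hπ : (0:ℝ) ≤ α / Real.pi := div_nonneg (by linarith) Real.pi_pos.le
      have gint : IntegrableOn (fun s : ℝ => (α / Real.pi * ‖ξ‖)
          * (CB0 α ξ * s^(-α) + CD0 α ξ * s^(-(2:ℝ)))) (Ioi (max sq 1)) volume := by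
        apply Integrable.const_mul
        exact ((integrableOn_Ioi_rpow_of_lt (by linarith) hS0).const_mul _).add
          ((integrableOn_Ioi_rpow_of_lt (by norm_num) hS0).const_mul _)
      refine Integrable.mono' gint (hsfc.aestronglyMeasurable.restrict) ?_
      filter_upwards [ae_restrict_mem measurableSet_Ioi] with s hs
      have hs1 : (1:ℝ) ≤ s := le_of_lt (lt_of_le_of_lt (le_max_right sq 1) hs)
      have hs0 : (0:ℝ) < s := by linarith
      rw [Real.norm_eq_abs, hsf s hs0, abs_mul, abs_of_nonneg hπ]
      calc (α / Real.pi) * |(Complex.I * ξ * J s).re|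
          ≤ (α / Real.pi) * ‖Complex.I * ξ * J s‖ :=
            mul_le_mul_of_nonneg_left (Complex.abs_re_le_norm _) hπ
        _ = (α / Real.pi) * (‖ξ‖ * ‖J s‖) := by
            rw [norm_mul, norm_mul, Complex.norm_I, one_mul]
        _ ≤ (α / Real.pi) * (‖ξ‖ * (CB0 α ξ * s^(-α) + CD0 α ξ * s^(-(2:ℝ)))) := by
            apply mul_le_mul_of_nonneg_left _ hπ
            exact mul_le_mul_of_nonneg_left (J_bound hα1 hα2 hr hs1) (norm_nonneg ξ)
        _ = (α / Real.pi * ‖ξ‖) * (CB0 α ξ * s^(-α) + CD0 α ξ * s^(-(2:ℝ))) := by ring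
  -- fundamental theorem of calculus
  have key := integral_Ioi_of_hasDerivAt_of_tendsto (a := sq)
    (f := fun s => -((α / Real.pi) * (ξ * K s).re)) (f' := fun s : ℝ => s * f s)
    ((hΦ sq hsq).continuousAt.continuousWithinAt)
    (fun x hx => hΦ x (hsq.trans hx)) hInt hΦ0
  rw [zero_sub, neg_neg] at key
  -- identify K sq with the statement's integral
  have hmatch : (∫ t in Set.Ioi (0:ℝ), ((t ^ (α - 2) : ℝ) : ℂ) *
        Complex.exp (-Complex.I * sq * t - ((t ^ α : ℝ) : ℂ) * ξ)) = K sq := by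
    apply setIntegral_congr_fun measurableSet_Ioi
    intro t _
    show ((t ^ (α - 2) : ℝ) : ℂ) * Complex.exp (-Complex.I * sq * t - ((t ^ α : ℝ) : ℂ) * ξ)
      = ((t ^ (α-2) : ℝ) : ℂ) * (osc sq t * G α ξ t)
    rw [show -Complex.I * (sq:ℂ) * (t:ℂ) = -Complex.I * (t:ℂ) * (sq:ℂ) by ring,
      E_eq α ξ sq t]
  constructor
  · rw [hmatch, key]
  · intro q hq
    rw [hmatch, key]
    have h1q : 1 - q ≠ 0 := by have := hq.2; intro h; linarith
    have hπ : Real.pi ≠ 0 := Real.pi_ne_zero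
    have hsc : α / (Real.pi * (1 - q)) = (1 / (1 - q)) * (α / Real.pi) := by
      field_simp
    rw [hsc]
    ring
end StableAux
end
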